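/- arXiv:1002.4233 — 2 statements merged into one kernel-verified Lean document; each statement's English description precedes it below -/
import Mathlib

section
/- Let P ⊆ A be an inclusion of separable unital C*-algebras and E: A → P a faithful conditional expectation of index-finite type with the Rokhlin property. If A is simple, then P is simple. -/
open Filter Topology

noncomputable section

universe u v w

/-! ### Star-closed two-sided ideals and their quotient star algebras -/

/-- A star-closed two-sided ideal of a ring with involution. -/
structure StarIdeal (R : Type*) [NonUnitalNonAssocRing R] [Star R] extends TwoSidedIdeal R where
  star_mem' : ∀ x : R, x ∈ toTwoSidedIdeal → star x ∈ toTwoSidedIdeal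

namespace StarIdeal

variable {R : Type v} [Ring R] [Algebra ℂ R] [StarRing R] (J : StarIdeal R)

/-- The quotient star algebra by a star-closed two-sided ideal. -/
def Quot (J : StarIdeal R) : Type _ := J.ringCon.Quotient

instance : Ring J.Quot := inferInstanceAs (Ring J.ringCon.Quotient)

/-- The quotient map. -/
def mkq : R →+* J.Quot := RingCon.mk' J.ringCon

lemma rel_of (a b : R) (h : a - b ∈ J.toTwoSidedIdeal) : J.ringCon a b :=
  (J.toTwoSidedIdeal.rel_iff a b).mpr h

lemma mem_of_rel {a b : R} (h : J.ringCon a b) : a - b ∈ J.toTwoSidedIdeal :=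
  (J.toTwoSidedIdeal.rel_iff a b).mp h

instance : Star J.Quot :=
  ⟨Quotient.map' (fun x => star x) (fun a b h => J.rel_of _ _ (by
    have := J.star_mem' _ (J.mem_of_rel h)
    simpa [star_sub] using this))⟩

lemma mkq_star (a : R) : J.mkq (star a) = star (J.mkq a) := rfl

instance : StarRing J.Quot where
  star_involutive := by rintro ⟨a⟩; exact congrArg (J.mkq) (star_star a)
  star_mul := by rintro ⟨a⟩ ⟨b⟩; exact congrArg (J.mkq) (star_mul a b)
  star_add := by rintro ⟨a⟩ ⟨b⟩; exact congrArg (J.mkq) (star_add a b)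

instance : SMul ℂ J.Quot :=
  ⟨fun c => Quotient.map' (fun x => c • x) (fun a b h => J.rel_of _ _ (by
    rw [← smul_sub, Algebra.smul_def]
    exact J.toTwoSidedIdeal.mul_mem_left _ _ (J.mem_of_rel h)))⟩

lemma mkq_smul (c : ℂ) (a : R) : J.mkq (c • a) = c • J.mkq a := rfl

instance : Module ℂ J.Quot where
  one_smul := by rintro ⟨a⟩; exact congrArg J.mkq (one_smul ℂ a)
  mul_smul c d := by rintro ⟨a⟩; exact congrArg J.mkq (mul_smul c d a)
  smul_zero c := congrArg J.mkq (smul_zero c)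
  smul_add c := by rintro ⟨a⟩ ⟨b⟩; exact congrArg J.mkq (smul_add c a b)
  add_smul c d := by rintro ⟨a⟩; exact congrArg J.mkq (add_smul c d a)
  zero_smul := by rintro ⟨a⟩; exact congrArg J.mkq (zero_smul ℂ a)

instance : Algebra ℂ J.Quot where
  algebraMap := J.mkq.comp (algebraMap ℂ R)
  commutes' c := by rintro ⟨a⟩; exact congrArg J.mkq (Algebra.commutes c a)
  smul_def' c := by rintro ⟨a⟩; exact congrArg J.mkq (Algebra.smul_def c a)

/-- The map between quotients induced by an inclusion of star ideals. -/
def quotMap {J K : StarIdeal R} (h : ∀ x, x ∈ J.toTwoSidedIdeal → x ∈ K.toTwoSidedIdeal) :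
    J.Quot → K.Quot :=
  Quotient.map' id (fun a b hab => K.rel_of _ _ (h _ (J.mem_of_rel hab)))

end StarIdeal

/-! ### The sequence algebra `A^∞ = ℓ^∞(ℕ, A)/c₀(ℕ, A)` -/

section Seq

variable (A : Type u) [CStarAlgebra A]

/-- The ℓ^∞-sequence star subalgebra of `ℕ → A`. -/
def bddSubalg : StarSubalgebra ℂ (ℕ → A) where
  carrier := {f | ∃ C, ∀ n, ‖f n‖ ≤ C}
  mul_mem' := by
    rintro f g ⟨C, hC⟩ ⟨D, hD⟩
    refine ⟨(max C 0) * (max D 0), fun n => ?_⟩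
    calc ‖(f * g) n‖ = ‖f n * g n‖ := rfl
      _ ≤ ‖f n‖ * ‖g n‖ := norm_mul_le _ _
      _ ≤ (max C 0) * (max D 0) := by
          apply mul_le_mul ((hC n).trans (le_max_left _ _)) ((hD n).trans (le_max_left _ _))
            (norm_nonneg _) (le_max_right _ _)
  one_mem' := ⟨‖(1 : A)‖, fun n => le_rfl⟩
  add_mem' := by
    rintro f g ⟨C, hC⟩ ⟨D, hD⟩
    exact ⟨C + D, fun n => (norm_add_le _ _).trans (add_le_add (hC n) (hD n))⟩
  zero_mem' := ⟨0, fun n => by simp⟩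
  algebraMap_mem' := fun c => ⟨‖c‖ * ‖(1 : A)‖, fun n => le_of_eq (norm_algebraMap A c)⟩
  star_mem' := by
    rintro f ⟨C, hC⟩
    exact ⟨C, fun n => by simpa [norm_star] using hC n⟩

/-- The C*-algebra of bounded sequences (as a type). -/
abbrev BddSeq := ↥(bddSubalg A)

/-- The ideal of null sequences inside the bounded sequences. -/
def nullIdeal : StarIdeal (BddSeq A) where
  toTwoSidedIdeal := TwoSidedIdeal.mk'
    {f : BddSeq A | Tendsto (fun n => ‖(f : ℕ → A) n‖) atTop (𝓝 0)}
    (by simpa using tendsto_const_nhds)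
    (by
      intro f g hf hg
      refine squeeze_zero (fun n => norm_nonneg _) (fun n => norm_add_le _ _) ?_
      simpa using hf.add hg)
    (by intro f hf; simpa using hf)
    (by
      intro f g hg
      obtain ⟨C, hC⟩ := f.2
      refine squeeze_zero (fun n => norm_nonneg _) (fun n => norm_mul_le _ _) ?_
      have : Tendsto (fun n => (max C 0) * ‖(g : ℕ → A) n‖) atTop (𝓝 ((max C 0) * 0)) :=
        hg.const_mul _
      refine squeeze_zero (fun n => by positivity) (fun n => ?_) (by simpa using this)
      exact mul_le_mul_of_nonneg_right ((hC n).trans (le_max_left _ _)) (norm_nonneg _))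
    (by
      intro f g hf
      obtain ⟨C, hC⟩ := g.2
      refine squeeze_zero (fun n => norm_nonneg _) (fun n => norm_mul_le _ _) ?_
      have : Tendsto (fun n => ‖(f : ℕ → A) n‖ * (max C 0)) atTop (𝓝 (0 * (max C 0))) :=
        hf.mul_const _
      refine squeeze_zero (fun n => by positivity) (fun n => ?_) (by simpa using this)
      exact mul_le_mul_of_nonneg_left ((hC n).trans (le_max_left _ _)) (norm_nonneg _))
  star_mem' := by
    intro f hf
    rw [TwoSidedIdeal.mem_mk'] at hf ⊢
    simpa [norm_star] using hf

lemma mem_nullIdeal_iff (f : BddSeq A) :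
    f ∈ (nullIdeal A).toTwoSidedIdeal ↔ Tendsto (fun n => ‖(f : ℕ → A) n‖) atTop (𝓝 0) := by
  constructor
  · intro h
    have h' : f - 0 ∈ {g : BddSeq A | Tendsto (fun n => ‖(g : ℕ → A) n‖) atTop (𝓝 0)} := h
    simpa using h'
  · intro h
    show f - 0 ∈ {g : BddSeq A | Tendsto (fun n => ‖(g : ℕ → A) n‖) atTop (𝓝 0)}
    simpa using h

/-- The sequence algebra `A^∞ = ℓ^∞(ℕ, A)/c₀(ℕ, A)` of a C*-algebra `A`. -/
def SeqAlg : Type u := (nullIdeal A).Quot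

instance : Ring (SeqAlg A) := inferInstanceAs (Ring (nullIdeal A).Quot)
instance : StarRing (SeqAlg A) := inferInstanceAs (StarRing (nullIdeal A).Quot)
instance : Algebra ℂ (SeqAlg A) := inferInstanceAs (Algebra ℂ (nullIdeal A).Quot)

variable {A}

/-- The constant sequence, as an element of the bounded sequences. -/
def constBdd (a : A) : BddSeq A := ⟨fun _ => a, ⟨‖a‖, fun _ => le_rfl⟩⟩

variable (A)

/-- The canonical unital embedding of `A` into `A^∞` by constant sequences. -/
def constSeq : A →⋆ₐ[ℂ] SeqAlg A where
  toFun a := (nullIdeal A).mkq (constBdd a)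
  map_one' := congrArg (nullIdeal A).mkq (by ext n; rfl)
  map_mul' a b := congrArg (nullIdeal A).mkq (by ext n; rfl)
  map_zero' := congrArg (nullIdeal A).mkq (by ext n; rfl)
  map_add' a b := congrArg (nullIdeal A).mkq (by ext n; rfl)
  commutes' c := congrArg (nullIdeal A).mkq (by ext n; rfl)
  map_star' a := congrArg (nullIdeal A).mkq (by ext n; rfl)

variable {A}
variable {B : Type u} [CStarAlgebra B]

/-- The bounded-sequence map induced by a contractive linear map. -/
def mapBdd (T : A →ₗ[ℂ] B) (hT : ∀ x, ‖T x‖ ≤ ‖x‖) (f : BddSeq A) : BddSeq B :=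
  ⟨fun n => T ((f : ℕ → A) n), by
    obtain ⟨C, hC⟩ := f.2
    exact ⟨C, fun n => (hT _).trans (hC n)⟩⟩

/-- The map `A^∞ → B^∞` induced componentwise by a contractive linear map `A → B`. -/
def mapSeq (T : A →ₗ[ℂ] B) (hT : ∀ x, ‖T x‖ ≤ ‖x‖) : SeqAlg A →ₗ[ℂ] SeqAlg B where
  toFun := Quotient.map' (mapBdd T hT) (by
    intro f g hfg
    refine (nullIdeal B).rel_of _ _ ?_
    have hmem := (mem_nullIdeal_iff A _).mp ((nullIdeal A).mem_of_rel hfg)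
    rw [mem_nullIdeal_iff]
    refine squeeze_zero (fun n => norm_nonneg _) (fun n => ?_) hmem
    show ‖T ((f : ℕ → A) n) - T ((g : ℕ → A) n)‖ ≤ _
    rw [← map_sub]
    exact hT _)
  map_add' := by
    rintro ⟨f⟩ ⟨g⟩
    exact congrArg (nullIdeal B).mkq (by ext n; exact map_add T _ _)
  map_smul' := by
    rintro c ⟨f⟩
    exact congrArg (nullIdeal B).mkq (by ext n; exact map_smul T c _)

/-- The contractive linear map underlying a star algebra homomorphism. -/
def starHomLin (φ : A →⋆ₐ[ℂ] B) : A →ₗ[ℂ] B := φ.toAlgHom.toLinearMap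

/-- The map `A^∞ → B^∞` induced by a star algebra homomorphism `A → B`. -/
def mapSeqHom (φ : A →⋆ₐ[ℂ] B) : SeqAlg A → SeqAlg B :=
  mapSeq (starHomLin φ) (fun x => NonUnitalStarAlgHom.norm_apply_le φ x)

/-- A projection in a star ring. -/
def IsProjection {R : Type w} [Mul R] [Star R] (p : R) : Prop := p * p = p ∧ star p = p

/-- A unitary element of a unital star ring. -/
def IsUnitaryElem {R : Type w} [Monoid R] [Star R] (u : R) : Prop :=
  star u * u = 1 ∧ u * star u = 1

end Seq

/-! ### Conditional expectations, quasi-bases and the Rokhlin property for inclusions -/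

section CondExp

variable {P A : Type u} [CStarAlgebra P] [CStarAlgebra A]

/-- A (faithful) conditional expectation onto a unital C*-subalgebra `P ⊆ A`, where the
inclusion is recorded by a unital star-algebra embedding `ι : P → A`. -/
structure CondExpectation (ι : P →⋆ₐ[ℂ] A) where
  toFun : A →ₗ[ℂ] P
  contractive : ∀ x : A, ‖toFun x‖ ≤ ‖x‖
  positive : ∀ x : A, ∃ y : P, toFun (star x * x) = star y * y
  fixes : ∀ p : P, toFun (ι p) = p
  bimodule : ∀ (p q : P) (x : A), toFun (ι p * x * ι q) = p * toFun x * q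

variable {ι : P →⋆ₐ[ℂ] A}

/-- Faithfulness of a conditional expectation. -/
def CondExpectation.Faithful (E : CondExpectation ι) : Prop :=
  ∀ x : A, E.toFun (star x * x) = 0 → x = 0

/-- A quasi-basis `{(uᵢ, uᵢ*)}` for a conditional expectation, in the sense of Watatani. -/
def CondExpectation.IsQuasiBasis (E : CondExpectation ι) {n : ℕ} (u : Fin n → A) : Prop :=
  ∀ x : A, ∑ i, ι (E.toFun (x * u i)) * star (u i) = x

/-- A conditional expectation is of index-finite type if it admits a quasi-basis. -/
def CondExpectation.IndexFiniteType (E : CondExpectation ι) : Prop :=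
  ∃ (n : ℕ) (u : Fin n → A), E.IsQuasiBasis u

/-- The Watatani index `Index E = ∑ᵢ uᵢ uᵢ*` associated to a quasi-basis. -/
def indexElt {n : ℕ} (u : Fin n → A) : A := ∑ i, u i * star (u i)

/-- `E` composed with the inclusion, as a contractive linear map `A → A`. -/
def CondExpectation.selfMap (E : CondExpectation ι) : A →ₗ[ℂ] A :=
  (starHomLin ι).comp E.toFun

lemma CondExpectation.selfMap_contractive (E : CondExpectation ι) (x : A) :
    ‖E.selfMap x‖ ≤ ‖x‖ :=
  (NonUnitalStarAlgHom.norm_apply_le ι (E.toFun x)).trans (E.contractive x)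

/-- The Rokhlin property for a conditional expectation of index-finite type (Kodaka–Osaka–Teruya):
there is a projection `e` in the central sequence algebra `A_∞ = A^∞ ∩ A'` with
`E^∞(e) = (Index E)⁻¹ · 1` such that `x ↦ xe` is injective on `A`. -/
def CondExpectation.RokhlinProperty (E : CondExpectation ι) : Prop :=
  ∃ (n : ℕ) (u : Fin n → A), E.IsQuasiBasis u ∧
    ∃ e : SeqAlg A, IsProjection e ∧ (∀ a : A, Commute (constSeq A a) e) ∧
      constSeq A (indexElt u) * mapSeq E.selfMap E.selfMap_contractive e = 1 ∧
      mapSeq E.selfMap E.selfMap_contractive e * constSeq A (indexElt u) = 1 ∧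
      ∀ x : A, constSeq A x * e = 0 → x = 0

end CondExp

/-! ### Minimal tensor products, `D`-absorption, strongly self-absorbing algebras -/

section Tensor

/-- `T`, together with the pair of commuting unital embeddings `jA : A → T`, `jB : B → T`,
is a realization of the minimal (spatial) tensor product `A ⊗min B`:  the induced map from the
algebraic tensor product `A ⊙ B` is injective with dense range, and the norm induced on `A ⊙ B`
is dominated by the norm induced by every other C*-algebra containing `A ⊙ B` via a commuting
pair of star homomorphisms. -/
structure IsMinTensorProduct (A B T : Type u) [CStarAlgebra A] [CStarAlgebra B] [CStarAlgebra T]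
    (jA : A →⋆ₐ[ℂ] T) (jB : B →⋆ₐ[ℂ] T) : Prop where
  commute : ∀ (a : A) (b : B), Commute (jA a) (jB b)
  injective : Function.Injective
    (Algebra.TensorProduct.lift jA.toAlgHom jB.toAlgHom commute)
  dense : DenseRange (Algebra.TensorProduct.lift jA.toAlgHom jB.toAlgHom commute)
  minimal : ∀ (S : Type u) [CStarAlgebra S] (iA : A →⋆ₐ[ℂ] S) (iB : B →⋆ₐ[ℂ] S)
    (hc : ∀ (a : A) (b : B), Commute (iA a) (iB b)),
    Function.Injective (Algebra.TensorProduct.lift iA.toAlgHom iB.toAlgHom hc) →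
    ∀ x : TensorProduct ℂ A B,
      ‖Algebra.TensorProduct.lift jA.toAlgHom jB.toAlgHom commute x‖ ≤
        ‖Algebra.TensorProduct.lift iA.toAlgHom iB.toAlgHom hc x‖

/-- A C*-algebra `A` absorbs `D` if `A ⊗min D ≅ A`; equivalently, `A` itself carries the
structure of a minimal tensor product of `A` and `D`. -/
def DAbsorbing (D A : Type u) [CStarAlgebra D] [CStarAlgebra A] : Prop :=
  ∃ (jA : A →⋆ₐ[ℂ] A) (jD : D →⋆ₐ[ℂ] A), IsMinTensorProduct A D A jA jD

/-- Approximate unitary equivalence of two maps, witnessed by a sequence of unitaries. -/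
def ApproxUnitEquiv {A B : Type u} [CStarAlgebra A] [CStarAlgebra B] (f g : A → B) : Prop :=
  ∃ v : ℕ → B, (∀ n, IsUnitaryElem (v n)) ∧
    ∀ a : A, Tendsto (fun n => ‖star (v n) * f a * v n - g a‖) atTop (𝓝 0)

/-- A separable unital C*-algebra `D ≠ ℂ` is strongly self-absorbing if there is an isomorphism
`D ≅ D ⊗min D` which is approximately unitarily equivalent to the first-factor embedding
`d ↦ d ⊗ 1`. (Here `D ⊗min D` is realized on `D` itself via a commuting pair `j₁, j₂`.) -/
def StronglySelfAbsorbing (D : Type u) [CStarAlgebra D] : Prop :=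
  TopologicalSpace.SeparableSpace D ∧ (¬ Nonempty (D ≃⋆ₐ[ℂ] ℂ)) ∧
    ∃ (j₁ j₂ : D →⋆ₐ[ℂ] D), IsMinTensorProduct D D D j₁ j₂ ∧
      ∃ φ : D ≃⋆ₐ[ℂ] D, ApproxUnitEquiv (fun d => j₁ d) (fun d => φ d)

end Tensor

/-! ### Finite group actions, the Rokhlin property and crossed products -/

section Action

/-- The group of star-algebra automorphisms of `A`, with composition as multiplication. -/
instance starAlgAutGroup (A : Type u) [CStarAlgebra A] : Group (A ≃⋆ₐ[ℂ] A) where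
  mul e f := f.trans e
  one := StarAlgEquiv.refl ℂ A
  inv := StarAlgEquiv.symm
  mul_assoc e f g := StarAlgEquiv.ext fun _ => rfl
  one_mul e := StarAlgEquiv.ext fun _ => rfl
  mul_one e := StarAlgEquiv.ext fun _ => rfl
  inv_mul_cancel e := StarAlgEquiv.ext fun x => e.symm_apply_apply x

variable {G : Type w} [Group G] [Fintype G] {A : Type u} [CStarAlgebra A]

/-- The map `A^∞ → A^∞` induced by the automorphism `α g`. -/
def actionSeq (α : G →* (A ≃⋆ₐ[ℂ] A)) (g : G) : SeqAlg A → SeqAlg A :=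
  mapSeqHom ((α g : A ≃⋆ₐ[ℂ] A) : A →⋆ₐ[ℂ] A)

/-- The Rokhlin property (Izumi) for an action of a finite group `G` on a unital C*-algebra:
a partition of unity of projections `{e_g} ⊆ A_∞` with `(α_g)_∞(e_h) = e_{gh}`. -/
def ActionRokhlin (α : G →* (A ≃⋆ₐ[ℂ] A)) : Prop :=
  ∃ e : G → SeqAlg A, (∀ g, IsProjection (e g)) ∧ (∑ g, e g = 1) ∧
    (∀ (g : G) (a : A), Commute (constSeq A a) (e g)) ∧
    (∀ g h : G, actionSeq α g (e h) = e (g * h))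

/-- `B` is (a realization of) the crossed product `A ⋊_α G` for an action `α` of a finite
group `G`:  it contains a covariant pair `(π, U)` whose products `π(a)U_g` span a dense
subspace, and it carries a faithful positive canonical conditional expectation onto `π(A)`. -/
structure IsCrossedProduct (α : G →* (A ≃⋆ₐ[ℂ] A)) (B : Type u) [CStarAlgebra B] : Prop where
  out : ∃ (π : A →⋆ₐ[ℂ] B) (U : G → B),
    Function.Injective π ∧
    (∀ g, IsUnitaryElem (U g)) ∧ U 1 = 1 ∧ (∀ g h, U g * U h = U (g * h)) ∧
    (∀ (g : G) (a : A), U g * π a * star (U g) = π (α g a)) ∧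
    Dense (↑(Submodule.span ℂ {b : B | ∃ (a : A) (g : G), b = π a * U g}) : Set B) ∧
    ∃ E : B →ₗ[ℂ] B, (∀ b, ‖E b‖ ≤ ‖b‖) ∧
      (∀ a : A, E (π a * U 1) = π a) ∧
      (∀ (a : A) (g : G), g ≠ 1 → E (π a * U g) = 0) ∧
      (∀ b : B, ∃ a : A, E (star b * b) = π (star a * a)) ∧
      (∀ b : B, E (star b * b) = 0 → b = 0)

end Action

/-! ### Various classes of C*-algebras -/

section Classes

variable (A : Type u) [CStarAlgebra A]

/-- A UHF algebra, via Glimm's local characterization: a separable unital C*-algebra which is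
locally approximated by unital copies of full matrix algebras. -/
def IsUHF : Prop :=
  TopologicalSpace.SeparableSpace A ∧
    ∀ (s : Finset A) (ε : ℝ), 0 < ε →
      ∃ k : ℕ, 0 < k ∧ ∃ φ : Matrix (Fin k) (Fin k) ℂ →⋆ₐ[ℂ] A,
        ∀ a ∈ s, ∃ m, ‖a - φ m‖ < ε

/-- The universal UHF algebra `U_∞` (supernatural number `∏ p^∞`): the UHF algebra into which
every full matrix algebra embeds unitally. -/
def IsUnivUHF : Prop :=
  IsUHF A ∧ ∀ k : ℕ, 0 < k → Nonempty (Matrix (Fin k) (Fin k) ℂ →⋆ₐ[ℂ] A)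

/-- The Cuntz algebra `O₂`: `A` is generated by two isometries `s₁, s₂` with
`s₁s₁* + s₂s₂* = 1` (by Cuntz's theorem such an algebra is unique up to isomorphism). -/
def IsCuntzO2 : Prop :=
  ∃ s₁ s₂ : A, star s₁ * s₁ = 1 ∧ star s₂ * s₂ = 1 ∧ s₁ * star s₁ + s₂ * star s₂ = 1 ∧
    (StarAlgebra.adjoin ℂ {s₁, s₂}).topologicalClosure = ⊤

/-- The Cuntz algebra `O_∞`: `A` is generated by a sequence of isometries with mutually
orthogonal range projections. -/
def IsCuntzOInf : Prop :=
  ∃ s : ℕ → A, (∀ i, star (s i) * s i = 1) ∧ (∀ i j, i ≠ j → star (s i) * s j = 0) ∧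
    (StarAlgebra.adjoin ℂ (Set.range s)).topologicalClosure = ⊤

/-- An AF algebra: a separable C*-algebra locally approximated by finite-dimensional
C*-subalgebras. -/
def IsAF : Prop :=
  TopologicalSpace.SeparableSpace A ∧
    ∀ (s : Finset A) (ε : ℝ), 0 < ε →
      ∃ S : StarSubalgebra ℂ A, FiniteDimensional ℂ S ∧ ∀ a ∈ s, ∃ b ∈ S, ‖a - b‖ < ε

/-- A simple C*-algebra: no nontrivial closed two-sided ideals. -/
def IsSimpleCStar : Prop :=
  Nontrivial A ∧ ∀ I : TwoSidedIdeal A, IsClosed (I : Set A) →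
    (I : Set A) = {0} ∨ (I : Set A) = Set.univ

/-- Semiprojectivity in the sense of Blackadar: every morphism into an inductive-limit quotient
`C/J`, where `J` is the closure of an increasing chain of (star-closed, closed two-sided)
ideals `Jₙ`, lifts to some `C/Jₙ`. -/
def SemiProjective : Prop :=
  ∀ (C : Type u) [CStarAlgebra C] (J : ℕ → StarIdeal C),
    (∀ n, IsClosed ((J n).toTwoSidedIdeal : Set C)) →
    (∀ (n : ℕ) (x : C), x ∈ (J n).toTwoSidedIdeal → x ∈ (J (n + 1)).toTwoSidedIdeal) →
    ∀ (Jtop : StarIdeal C),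
      (Jtop.toTwoSidedIdeal : Set C)
        = closure (⋃ n, ((J n).toTwoSidedIdeal : Set C)) →
      ∀ φ : A →⋆ₐ[ℂ] Jtop.Quot,
        ∃ (n : ℕ) (hle : ∀ x : C, x ∈ (J n).toTwoSidedIdeal → x ∈ Jtop.toTwoSidedIdeal)
          (ψ : A →⋆ₐ[ℂ] (J n).Quot),
          ∀ a : A, StarIdeal.quotMap hle (ψ a) = φ a

/-- A completely positive map between C*-algebras: all matrix amplifications are positive. -/
def CompletelyPositive {A B : Type u} [CStarAlgebra A] [CStarAlgebra B] (φ : A →ₗ[ℂ] B) : Prop :=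
  ∀ (n : ℕ) (x : Matrix (Fin n) (Fin n) A),
    (∃ y : Matrix (Fin n) (Fin n) A, x = star y * y) →
      ∃ z : Matrix (Fin n) (Fin n) B, x.map ⇑φ = star z * z

/-- Nuclearity, via the completely positive approximation property: the identity map is a
pointwise-norm limit of finite-rank completely positive contractions. -/
def IsNuclearCStar : Prop :=
  ∀ (s : Finset A) (ε : ℝ), 0 < ε →
    ∃ φ : A →ₗ[ℂ] A, CompletelyPositive φ ∧ (∀ x, ‖φ x‖ ≤ ‖x‖) ∧
      FiniteDimensional ℂ ↥(LinearMap.range φ) ∧ ∀ a ∈ s, ‖φ a - a‖ < ε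

/-- Approximate divisibility: some finite-dimensional C*-algebra with no abelian summands
(i.e. a direct sum of matrix algebras `M_{kᵢ}` with all `kᵢ ≥ 2`) embeds unitally into
`A' ∩ A^∞`. -/
def ApproxDivisible : Prop :=
  ∃ (m : ℕ) (k : Fin m → ℕ), 0 < m ∧ (∀ i, 2 ≤ k i) ∧
    ∃ ψ : (Π i, Matrix (Fin (k i)) (Fin (k i)) ℂ) →⋆ₐ[ℂ] SeqAlg A,
      Function.Injective ψ ∧ ∀ b a, Commute (ψ b) (constSeq A a)

/-- `A` has approximately inner half flip:  in (any realization of) `A ⊗min A` the two factor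
embeddings are approximately unitarily equivalent. -/
def ApproxInnerHalfFlip : Prop :=
  ∀ (T : Type u) [CStarAlgebra T] (j₁ j₂ : A →⋆ₐ[ℂ] T),
    IsMinTensorProduct A A T j₁ j₂ →
    ApproxUnitEquiv (fun a => j₁ a) (fun a => j₂ a)

end Classes

/-! ### The tracial Rokhlin property -/

section Tracial

variable {G : Type w} [Group G] [Fintype G] {A : Type u} [CStarAlgebra A]

/-- The tracial Rokhlin property (Phillips) for a finite group action. -/
def TracialRokhlin (α : G →* (A ≃⋆ₐ[ℂ] A)) : Prop :=
  ∀ (s : Finset A) (ε : ℝ), 0 < ε → ∀ x : A, (∃ y, x = star y * y) → x ≠ 0 →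
    ∃ e : G → A, (∀ g, IsProjection (e g)) ∧
      (∀ g h, g ≠ h → e g * e h = 0) ∧
      (∀ g h : G, ‖α g (e h) - e (g * h)‖ < ε) ∧
      (∀ g : G, ∀ a ∈ s, ‖e g * a - a * e g‖ < ε) ∧
      ∃ v : A, star v * v = 1 - ∑ g, e g ∧ IsProjection (v * star v) ∧
        v * star v ∈ closure {b : A | ∃ a : A, b = x * a * x}

end Tracial

/-! ### Crossed products by `ℤ` and the Bunce–Deddens algebra -/

section ZCrossed

variable {A : Type v} [CStarAlgebra A]

/-- `B` is (a realization of) the crossed product `A ⋊_θ ℤ` of a single automorphism,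
characterized by a covariant pair with dense span of `π(a)Uⁿ` together with a faithful
positive expectation onto `π(A)` killing all `π(a)Uⁿ`, `n ≠ 0`. -/
structure IsZCrossedProduct (θ : A ≃⋆ₐ[ℂ] A) (B : Type u) [CStarAlgebra B] : Prop where
  out : ∃ (π : A →⋆ₐ[ℂ] B) (U : ℤ → B),
    Function.Injective π ∧
    (∀ n, IsUnitaryElem (U n)) ∧ U 0 = 1 ∧ (∀ m n, U m * U n = U (m + n)) ∧
    (∀ a : A, U 1 * π a * star (U 1) = π (θ a)) ∧
    Dense (↑(Submodule.span ℂ {b : B | ∃ (a : A) (n : ℤ), b = π a * U n}) : Set B) ∧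
    ∃ E : B →ₗ[ℂ] B, (∀ b, ‖E b‖ ≤ ‖b‖) ∧
      (∀ a : A, E (π a * U 0) = π a) ∧
      (∀ (a : A) (n : ℤ), n ≠ 0 → E (π a * U n) = 0) ∧
      (∀ b : B, ∃ a : A, E (star b * b) = π (star a * a)) ∧
      (∀ b : B, E (star b * b) = 0 → b = 0)

/-- The Bunce–Deddens algebra of type `2^∞`, realized as the crossed product
`C(ℤ₂) ⋊ ℤ` of the 2-adic odometer. -/
def IsBunceDeddens2 (B : Type u) [CStarAlgebra B] : Prop :=
  ∃ θ : C(ℤ_[2], ℂ) ≃⋆ₐ[ℂ] C(ℤ_[2], ℂ),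
    (∀ (f : C(ℤ_[2], ℂ)) (x : ℤ_[2]), θ f x = f (x + 1)) ∧ IsZCrossedProduct θ B

end ZCrossed

/-! ### Bundled C*-algebras, finitely saturated classes, local classes -/

section Bundle

/-- A bundled (unital) C*-algebra. -/
structure CStarBundle : Type (u + 1) where
  carrier : Type u
  [inst : CStarAlgebra carrier]

attribute [instance] CStarBundle.inst

instance : CoeSort CStarBundle.{u} (Type u) := ⟨CStarBundle.carrier⟩

/-- A class of C*-algebras is finitely saturated if it is closed under isomorphism,
finite direct sums, matrix amplification, and corners by nonzero projections. -/
def FinitelySaturated (Q : CStarBundle.{u} → Prop) : Prop :=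
  (∀ X Y : CStarBundle.{u}, Q X → Nonempty (Y.carrier ≃⋆ₐ[ℂ] X.carrier) → Q Y) ∧
  (∀ (n : ℕ) (F : Fin n → CStarBundle.{u}), (∀ i, Q (F i)) →
    Q ⟨Π i, (F i).carrier⟩) ∧
  (∀ (n : ℕ), 0 < n → ∀ X Y : CStarBundle.{u}, Q X →
    Nonempty (Y.carrier ≃⋆ₐ[ℂ] Matrix (Fin n) (Fin n) X.carrier) → Q Y) ∧
  (∀ X : CStarBundle.{u}, Q X → ∀ p : X.carrier, IsProjection p → p ≠ 0 →
    ∀ Y : CStarBundle.{u}, ∀ j : Y.carrier →⋆ₙₐ[ℂ] X.carrier, Function.Injective j →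
      Set.range j = {x : X.carrier | ∃ a : X.carrier, x = p * a * p} → Q Y)

/-- The finite saturation of a class: the smallest finitely saturated class containing it. -/
def FinSaturation (C : CStarBundle.{u} → Prop) (X : CStarBundle.{u}) : Prop :=
  ∀ Q : CStarBundle.{u} → Prop, FinitelySaturated Q → (∀ Y, C Y → Q Y) → Q X

/-- A unital local `C`-algebra: every finite subset is approximately contained in the image of
a unital *-homomorphism from a member of the finite saturation of `C`. -/
def IsLocalClassAlgebra (C : CStarBundle.{u} → Prop) (A : Type u) [CStarAlgebra A] : Prop :=
  ∀ (s : Finset A) (ε : ℝ), 0 < ε →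
    ∃ X : CStarBundle.{u}, FinSaturation C X ∧
      ∃ φ : X.carrier →⋆ₐ[ℂ] A, ∀ a ∈ s, ∃ b : X.carrier, ‖a - φ b‖ < ε

end Bundle

/-! ### Averaging expectations for finite group actions and their subgroups -/

section Average

variable {G : Type w} [Group G] [Fintype G] {A : Type u} [CStarAlgebra A]

/-- The canonical conditional expectation onto the fixed point algebra of a subgroup `H ≤ G`:
`E_H(x) = |H|⁻¹ ∑_{h ∈ H} α_h(x)`, as a linear map `A → A`. -/
def subgroupAvg (α : G →* (A ≃⋆ₐ[ℂ] A)) (H : Subgroup G) [Fintype H] : A →ₗ[ℂ] A where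
  toFun x := (Fintype.card H : ℂ)⁻¹ • ∑ h : H, α (h : G) x
  map_add' x y := by
    simp only [map_add, Finset.sum_add_distrib, smul_add]
  map_smul' c x := by
    simp only [map_smul, RingHom.id_apply, ← Finset.smul_sum]
    rw [smul_comm]

lemma subgroupAvg_contractive (α : G →* (A ≃⋆ₐ[ℂ] A)) (H : Subgroup G) [Fintype H] (x : A) :
    ‖subgroupAvg α H x‖ ≤ ‖x‖ := by
  have h1 : ‖∑ h : H, α (h : G) x‖ ≤ (Fintype.card H : ℝ) * ‖x‖ := by
    calc ‖∑ h : H, α (h : G) x‖ ≤ ∑ _h : H, ‖x‖ := by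
          refine (norm_sum_le _ _).trans (Finset.sum_le_sum fun h _ => ?_)
          exact NonUnitalStarAlgHom.norm_apply_le (α (h : G)) x
      _ = (Fintype.card H : ℝ) * ‖x‖ := by
          simp [Finset.sum_const, Finset.card_univ, nsmul_eq_mul]
  have h0 : (0 : ℝ) < (Fintype.card H : ℝ) := by
    exact_mod_cast Fintype.card_pos
  calc ‖subgroupAvg α H x‖ = ‖(Fintype.card H : ℂ)⁻¹‖ * ‖∑ h : H, α (h : G) x‖ := by
        rw [subgroupAvg]; exact norm_smul _ _
    _ ≤ ((Fintype.card H : ℝ))⁻¹ * ((Fintype.card H : ℝ) * ‖x‖) := by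
        apply mul_le_mul _ h1 (norm_nonneg _) (by positivity)
        simp
    _ = ‖x‖ := by field_simp
/-- The canonical conditional expectation onto the fixed point algebra of `G`:
`E(x) = |G|⁻¹ ∑_{g ∈ G} α_g(x)`, as a linear map `A → A`. -/
def groupAvg (α : G →* (A ≃⋆ₐ[ℂ] A)) : A →ₗ[ℂ] A where
  toFun x := (Fintype.card G : ℂ)⁻¹ • ∑ g : G, α g x
  map_add' x y := by
    simp only [map_add, Finset.sum_add_distrib, smul_add]
  map_smul' c x := by
    simp only [map_smul, RingHom.id_apply, ← Finset.smul_sum]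
    rw [smul_comm]

lemma groupAvg_contractive (α : G →* (A ≃⋆ₐ[ℂ] A)) (x : A) :
    ‖groupAvg α x‖ ≤ ‖x‖ := by
  have h1 : ‖∑ g : G, α g x‖ ≤ (Fintype.card G : ℝ) * ‖x‖ := by
    calc ‖∑ g : G, α g x‖ ≤ ∑ _g : G, ‖x‖ := by
          refine (norm_sum_le _ _).trans (Finset.sum_le_sum fun g _ => ?_)
          exact NonUnitalStarAlgHom.norm_apply_le (α g) x
      _ = (Fintype.card G : ℝ) * ‖x‖ := by
          simp [Finset.sum_const, Finset.card_univ, nsmul_eq_mul]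
  have h0 : (0 : ℝ) < (Fintype.card G : ℝ) := by exact_mod_cast Fintype.card_pos
  calc ‖groupAvg α x‖ = ‖(Fintype.card G : ℂ)⁻¹‖ * ‖∑ g : G, α g x‖ := by
        rw [groupAvg]; exact norm_smul _ _
    _ ≤ ((Fintype.card G : ℝ))⁻¹ * ((Fintype.card G : ℝ) * ‖x‖) := by
        apply mul_le_mul _ h1 (norm_nonneg _) (by positivity)
        simp
    _ = ‖x‖ := by field_simp

end Average


/-! ### Auxiliary development for Statement 6 -/

section Statement6Aux

attribute [local instance] CStarAlgebra.spectralOrder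

noncomputable local instance (priority := 100) (B : Type _) [CStarAlgebra B] :
    StarOrderedRing B := CStarAlgebra.spectralOrderedRing B

section Cstar

variable {B : Type u} [CStarAlgebra B]

lemma s6_exists_star_mul_self {x : B} (hx : 0 ≤ x) : ∃ y : B, x = star y * y := by
  refine ⟨CFC.sqrt x, ?_⟩
  rw [(IsSelfAdjoint.of_nonneg (CFC.sqrt_nonneg (a := x))).star_eq, CFC.sqrt_mul_sqrt_self x hx]

end Cstar

section SeqInfra

variable {A : Type u} [CStarAlgebra A]

/-- The quotient map into the sequence algebra, with the `SeqAlg` type. -/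
noncomputable def s6mk (f : BddSeq A) : SeqAlg A := (nullIdeal A).mkq f

lemma s6mk_mul (f g : BddSeq A) : s6mk (f * g) = s6mk f * s6mk g :=
  map_mul ((nullIdeal A).mkq) f g

lemma s6mk_add (f g : BddSeq A) : s6mk (f + g) = s6mk f + s6mk g :=
  map_add ((nullIdeal A).mkq) f g

lemma s6mk_sub (f g : BddSeq A) : s6mk (f - g) = s6mk f - s6mk g :=
  map_sub ((nullIdeal A).mkq) f g

lemma s6mk_one : s6mk (1 : BddSeq A) = 1 :=
  map_one ((nullIdeal A).mkq)

lemma s6mk_star (f : BddSeq A) : s6mk (star f) = star (s6mk f) :=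
  (nullIdeal A).mkq_star f

lemma s6mk_smul (c : ℂ) (f : BddSeq A) : s6mk (c • f) = c • s6mk f :=
  (nullIdeal A).mkq_smul c f

lemma s6mk_sum {κ : Type*} (s : Finset κ) (f : κ → BddSeq A) :
    s6mk (∑ i ∈ s, f i) = ∑ i ∈ s, s6mk (f i) :=
  map_sum ((nullIdeal A).mkq) f s

lemma s6mk_surj (w : SeqAlg A) : ∃ f : BddSeq A, s6mk f = w :=
  Quotient.exists_rep w

@[simp] lemma s6_coe_mul (f g : BddSeq A) (m : ℕ) :
    ((f * g : BddSeq A) : ℕ → A) m = (f : ℕ → A) m * (g : ℕ → A) m := rfl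

@[simp] lemma s6_coe_add (f g : BddSeq A) (m : ℕ) :
    ((f + g : BddSeq A) : ℕ → A) m = (f : ℕ → A) m + (g : ℕ → A) m := rfl

@[simp] lemma s6_coe_sub (f g : BddSeq A) (m : ℕ) :
    ((f - g : BddSeq A) : ℕ → A) m = (f : ℕ → A) m - (g : ℕ → A) m := rfl

@[simp] lemma s6_coe_star (f : BddSeq A) (m : ℕ) :
    ((star f : BddSeq A) : ℕ → A) m = star ((f : ℕ → A) m) := rfl

@[simp] lemma s6_coe_smul (c : ℂ) (f : BddSeq A) (m : ℕ) :
    ((c • f : BddSeq A) : ℕ → A) m = c • ((f : ℕ → A) m) := rfl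

@[simp] lemma s6_coe_one (m : ℕ) : ((1 : BddSeq A) : ℕ → A) m = 1 := rfl

@[simp] lemma s6_coe_constBdd (a : A) (m : ℕ) : ((constBdd a : BddSeq A) : ℕ → A) m = a := rfl

lemma s6mk_eq_iff {f g : BddSeq A} :
    s6mk f = s6mk g ↔
      Tendsto (fun m => ‖(f : ℕ → A) m - (g : ℕ → A) m‖) atTop (𝓝 0) := by
  constructor
  · intro h
    have hrel : (nullIdeal A).ringCon f g := Quotient.eq''.mp h
    have hmem := (nullIdeal A).mem_of_rel hrel
    have := (mem_nullIdeal_iff A _).mp hmem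
    simpa using this
  · intro h
    refine Quotient.sound' ?_
    refine (nullIdeal A).rel_of _ _ ?_
    rw [mem_nullIdeal_iff]
    simpa using h

lemma s6mk_eq_zero_iff {f : BddSeq A} :
    s6mk f = 0 ↔ Tendsto (fun m => ‖(f : ℕ → A) m‖) atTop (𝓝 0) := by
  have h0 : (0 : SeqAlg A) = s6mk 0 := (map_zero ((nullIdeal A).mkq)).symm
  rw [h0, s6mk_eq_iff]
  simp

lemma s6_constSeq_mk (a : A) : constSeq A a = s6mk (constBdd a) := rfl

variable {Bc : Type u} [CStarAlgebra Bc]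

lemma s6_mapSeq_mk (T : A →ₗ[ℂ] Bc) (hT : ∀ x, ‖T x‖ ≤ ‖x‖) (f : BddSeq A) :
    mapSeq T hT (s6mk f) = s6mk (mapBdd T hT f) := rfl

@[simp] lemma s6_coe_mapBdd (T : A →ₗ[ℂ] Bc) (hT : ∀ x, ‖T x‖ ≤ ‖x‖) (f : BddSeq A) (m : ℕ) :
    ((mapBdd T hT f : BddSeq Bc) : ℕ → Bc) m = T ((f : ℕ → A) m) := rfl

end SeqInfra

section Elayer

open ComplexStarModule

variable {P A : Type u} [CStarAlgebra P] [CStarAlgebra A]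
variable (ι : P →⋆ₐ[ℂ] A) (E : CondExpectation ι)

lemma s6_Eone : E.toFun 1 = 1 := by simpa using E.fixes 1

lemma s6_Eleft (p : P) (x : A) : E.toFun (ι p * x) = p * E.toFun x := by
  have h := E.bimodule p 1 x
  simpa using h

lemma s6_Eright (x : A) (q : P) : E.toFun (x * ι q) = E.toFun x * q := by
  have h := E.bimodule 1 q x
  simpa using h

lemma s6_Epos {x : A} (hx : 0 ≤ x) : 0 ≤ E.toFun x := by
  obtain ⟨y, rfl⟩ := s6_exists_star_mul_self hx
  obtain ⟨z, hz⟩ := E.positive y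
  rw [hz]
  exact star_mul_self_nonneg z

lemma s6_Esa {h : A} (hh : IsSelfAdjoint h) : IsSelfAdjoint (E.toFun h) := by
  set c : A := algebraMap ℝ A ‖h‖ with hc
  have h1 : 0 ≤ c - h := sub_nonneg.mpr hh.le_algebraMap_norm_self
  have h2 : 0 ≤ c + h := by
    have hneg := hh.neg_algebraMap_norm_le_self
    have := add_le_add_right hneg c
    exact neg_le_iff_add_nonneg'.mp hneg
  obtain ⟨y, hy⟩ := s6_exists_star_mul_self h1
  obtain ⟨x, hx⟩ := s6_exists_star_mul_self h2
  have hdec : h = (2⁻¹ : ℂ) • ((c + h) - (c - h)) := by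
    rw [show (c + h) - (c - h) = h + h by abel]
    rw [← two_smul ℂ h, smul_smul]
    norm_num
  have hsa1 : IsSelfAdjoint (E.toFun (c + h)) := by
    rw [hx]
    obtain ⟨z, hz⟩ := E.positive x
    rw [hz]
    exact IsSelfAdjoint.star_mul_self z
  have hsa2 : IsSelfAdjoint (E.toFun (c - h)) := by
    rw [hy]
    obtain ⟨z, hz⟩ := E.positive y
    rw [hz]
    exact IsSelfAdjoint.star_mul_self z
  rw [hdec, map_smul, map_sub]
  have : IsSelfAdjoint (E.toFun (c + h) - E.toFun (c - h)) := hsa1.sub hsa2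
  refine IsSelfAdjoint.smul ?_ this
  have hsa : IsSelfAdjoint (((2⁻¹:ℝ)):ℂ) := by
    rw [IsSelfAdjoint, Complex.star_def, Complex.conj_ofReal]
  simpa using hsa

lemma s6_Estar (x : A) : E.toFun (star x) = star (E.toFun x) := by
  have h1 : star (E.toFun (ℜ x : A)) = E.toFun (ℜ x : A) := (s6_Esa ι E (ℜ x).2).star_eq
  have h2 : star (E.toFun (ℑ x : A)) = E.toFun (ℑ x : A) := (s6_Esa ι E (ℑ x).2).star_eq
  have hx : x = (ℜ x : A) + Complex.I • (ℑ x : A) := (realPart_add_I_smul_imaginaryPart x).symm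
  have hsx : star x = (ℜ x : A) - Complex.I • (ℑ x : A) := by
    conv_lhs => rw [hx]
    rw [star_add, star_smul]
    rw [(ℜ x).2.star_eq, (ℑ x).2.star_eq]
    simp [Complex.star_def, Complex.conj_I, sub_eq_add_neg]
  rw [hsx, map_sub, map_smul]
  conv_rhs => rw [hx]
  rw [map_add, map_smul, star_add, star_smul, h1, h2]
  simp [Complex.star_def, Complex.conj_I, sub_eq_add_neg]

lemma s6_Emono {x y : A} (h : x ≤ y) : E.toFun x ≤ E.toFun y := by
  have h0 : 0 ≤ E.toFun (y - x) := s6_Epos ι E (sub_nonneg.mpr h)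
  rw [map_sub] at h0
  exact sub_nonneg.mp h0

lemma s6_iota_pos {p : P} (hp : 0 ≤ p) : 0 ≤ ι p := by
  obtain ⟨y, rfl⟩ := s6_exists_star_mul_self hp
  rw [map_mul, map_star]
  exact star_mul_self_nonneg _

lemma s6_iota_mono {p q : P} (h : p ≤ q) : ι p ≤ ι q := by
  have h0 : 0 ≤ ι (q - p) := s6_iota_pos ι (sub_nonneg.mpr h)
  rw [map_sub] at h0
  exact sub_nonneg.mp h0

lemma s6_Eschwarz (a : A) : star (E.toFun a) * E.toFun a ≤ E.toFun (star a * a) := by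
  set q := E.toFun a with hq
  have h0 : 0 ≤ E.toFun (star (a - ι q) * (a - ι q)) :=
    s6_Epos ι E (star_mul_self_nonneg _)
  have hexp : star (a - ι q) * (a - ι q)
      = star a * a - star a * ι q - star (ι q) * a + star (ι q) * ι q := by
    rw [star_sub]; noncomm_ring
  rw [hexp] at h0
  have e1 : E.toFun (star a * ι q) = star q * q := by
    rw [s6_Eright, ← s6_Estar]
  have e2 : E.toFun (star (ι q) * a) = star q * q := by
    rw [← map_star, s6_Eleft, ← s6_Estar]
  have e3 : E.toFun (star (ι q) * ι q) = star q * q := by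
    rw [← map_star, ← map_mul, E.fixes]
  rw [map_add, map_sub, map_sub, e1, e2, e3] at h0
  have h1 : 0 ≤ E.toFun (star a * a) - star q * q := by
    convert h0 using 1; abel
  exact sub_nonneg.mp h1

lemma s6_Eschwarz' (a : A) : E.toFun a * star (E.toFun a) ≤ E.toFun (a * star a) := by
  have h := s6_Eschwarz ι E (star a)
  rw [s6_Estar, star_star, star_star] at h
  exact h

end Elayer

section QBlayer

variable {P A : Type u} [CStarAlgebra P] [CStarAlgebra A]
variable (ι : P →⋆ₐ[ℂ] A) (E : CondExpectation ι)
variable {n : ℕ} {u : Fin n → A}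

lemma s6_left_qb (hqb : E.IsQuasiBasis u) (x : A) :
    ∑ i, u i * ι (E.toFun (star (u i) * x)) = x := by
  have h := congrArg star (hqb (star x))
  rw [star_sum, star_star] at h
  calc ∑ i, u i * ι (E.toFun (star (u i) * x))
      = ∑ i, star (ι (E.toFun (star x * u i)) * star (u i)) := by
        refine Finset.sum_congr rfl fun i _ => ?_
        have : star (ι (E.toFun (star x * u i)) * star (u i))
            = u i * ι (E.toFun (star (u i) * x)) := by
          rw [star_mul, star_star, ← map_star ι, ← s6_Estar ι E, star_mul, star_star]
        exact this.symm
    _ = x := h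

lemma s6_sq_bound (a : A) (i : Fin n) :
    ‖ι (E.toFun (a * u i))‖ ^ 2 ≤ ‖u i‖ ^ 2 * ‖ι (E.toFun (a * star a))‖ := by
  set y := E.toFun (a * u i) with hy
  have key : ι y * star (ι y) = ι (y * star y) := by rw [map_mul, map_star]
  have h1 : y * star y ≤ E.toFun ((a * u i) * star (a * u i)) := s6_Eschwarz' ι E _
  have h2 : (a * u i) * star (a * u i) ≤ a * (algebraMap ℝ A (‖u i‖^2)) * star a := by
    have hu : u i * star (u i) ≤ algebraMap ℝ A (‖u i‖^2) :=
      CStarAlgebra.mul_star_le_algebraMap_norm_sq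
    calc (a * u i) * star (a * u i) = a * (u i * star (u i)) * star a := by
          rw [star_mul]; noncomm_ring
      _ ≤ a * (algebraMap ℝ A (‖u i‖^2)) * star a := star_right_conjugate_le_conjugate hu a
  set c : ℂ := ((‖u i‖^2 : ℝ) : ℂ) with hcdef
  have h3 : a * (algebraMap ℝ A (‖u i‖^2)) * star a = c • (a * star a) := by
    rw [IsScalarTower.algebraMap_apply ℝ ℂ A, Complex.coe_algebraMap,
      Algebra.algebraMap_eq_smul_one, mul_smul_comm, mul_one, smul_mul_assoc]
  have h4 : y * star y ≤ c • E.toFun (a * star a) := by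
    refine h1.trans ?_
    have h := s6_Emono ι E (h3 ▸ h2)
    rwa [map_smul] at h
  have h5 : ι (y * star y) ≤ c • ι (E.toFun (a * star a)) := by
    have h := s6_iota_mono ι h4
    rwa [map_smul] at h
  have hpos : 0 ≤ ι (y * star y) := by
    rw [← key]; exact mul_star_self_nonneg _
  have h6 : ‖ι (y * star y)‖ ≤ ‖c • ι (E.toFun (a * star a))‖ :=
    CStarAlgebra.norm_le_norm_of_nonneg_of_le hpos h5
  have h7 : ‖c • ι (E.toFun (a * star a))‖ = ‖u i‖^2 * ‖ι (E.toFun (a * star a))‖ := by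
    rw [norm_smul, hcdef, Complex.norm_real, Real.norm_eq_abs, abs_of_nonneg (by positivity)]
  calc ‖ι y‖ ^ 2 = ‖ι y * star (ι y)‖ := by
        rw [CStarRing.norm_self_mul_star, pow_two]
    _ = ‖ι (y * star y)‖ := by rw [key]
    _ ≤ ‖u i‖^2 * ‖ι (E.toFun (a * star a))‖ := h6.trans_eq h7

lemma s6_pp (hqb : E.IsQuasiBasis u) (a : A) :
    ‖a‖ ≤ (∑ i, ‖u i‖^2) * Real.sqrt ‖ι (E.toFun (a * star a))‖ := by
  conv_lhs => rw [← hqb a]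
  calc ‖∑ i, ι (E.toFun (a * u i)) * star (u i)‖
      ≤ ∑ i, ‖ι (E.toFun (a * u i))‖ * ‖u i‖ := by
        refine (norm_sum_le _ _).trans (Finset.sum_le_sum fun i _ => ?_)
        exact (norm_mul_le _ _).trans (by rw [norm_star])
    _ ≤ ∑ i, (‖u i‖ * Real.sqrt ‖ι (E.toFun (a * star a))‖) * ‖u i‖ := by
        refine Finset.sum_le_sum fun i _ => ?_
        refine mul_le_mul_of_nonneg_right ?_ (norm_nonneg _)
        have hsq := s6_sq_bound ι E (u := u) a i
        calc ‖ι (E.toFun (a * u i))‖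
            = Real.sqrt (‖ι (E.toFun (a * u i))‖^2) := (Real.sqrt_sq (norm_nonneg _)).symm
          _ ≤ Real.sqrt (‖u i‖^2 * ‖ι (E.toFun (a * star a))‖) := Real.sqrt_le_sqrt hsq
          _ = ‖u i‖ * Real.sqrt ‖ι (E.toFun (a * star a))‖ := by
              rw [Real.sqrt_mul (by positivity), Real.sqrt_sq (norm_nonneg _)]
    _ = (∑ i, ‖u i‖^2) * Real.sqrt ‖ι (E.toFun (a * star a))‖ := by
        rw [Finset.sum_mul]
        refine Finset.sum_congr rfl fun i _ => ?_
        ring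

lemma s6_pp_tendsto (hqb : E.IsQuasiBasis u) (f : ℕ → A)
    (hf : Tendsto (fun m => ‖ι (E.toFun (f m * star (f m)))‖) atTop (𝓝 0)) :
    Tendsto (fun m => ‖f m‖) atTop (𝓝 0) := by
  have hb : ∀ m, ‖f m‖ ≤ (∑ i, ‖u i‖^2) * Real.sqrt ‖ι (E.toFun (f m * star (f m)))‖ :=
    fun m => s6_pp ι E hqb (f m)
  have h2 : Tendsto (fun m => (∑ i, ‖u i‖^2) *
      Real.sqrt ‖ι (E.toFun (f m * star (f m)))‖) atTop (𝓝 0) := by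
    have hs := (Real.continuous_sqrt.tendsto 0).comp hf
    rw [Real.sqrt_zero] at hs
    simpa using hs.const_mul ((∑ i, ‖u i‖^2) : ℝ)
  exact squeeze_zero (fun m => norm_nonneg _) hb h2

lemma s6_indexElt_sa : IsSelfAdjoint (indexElt u) := by
  rw [IsSelfAdjoint, indexElt, star_sum]
  exact Finset.sum_congr rfl fun i _ => by rw [star_mul, star_star]

lemma s6_central (hqb : E.IsQuasiBasis u) (a : A) : indexElt u * a = a * indexElt u := by
  rw [indexElt, Finset.sum_mul, Finset.mul_sum]
  have lhs : ∀ i, (u i * star (u i)) * a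
      = ∑ j, u i * (ι (E.toFun ((star (u i) * a) * u j)) * star (u j)) := by
    intro i
    rw [mul_assoc, ← Finset.mul_sum, hqb (star (u i) * a)]
  have rhs : ∀ j, a * (u j * star (u j))
      = ∑ i, u i * (ι (E.toFun ((star (u i) * a) * u j)) * star (u j)) := by
    intro j
    have h := s6_left_qb ι E hqb (a * u j)
    calc a * (u j * star (u j)) = (a * u j) * star (u j) := by rw [mul_assoc]
      _ = (∑ i, u i * ι (E.toFun (star (u i) * (a * u j)))) * star (u j) := by rw [h]
      _ = ∑ i, u i * (ι (E.toFun ((star (u i) * a) * u j)) * star (u j)) := by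
          rw [Finset.sum_mul]
          refine Finset.sum_congr rfl fun i _ => ?_
          rw [mul_assoc, mul_assoc]
  calc ∑ i, (u i * star (u i)) * a
      = ∑ i, ∑ j, u i * (ι (E.toFun ((star (u i) * a) * u j)) * star (u j)) :=
        Finset.sum_congr rfl (fun i _ => lhs i)
    _ = ∑ j, ∑ i, u i * (ι (E.toFun ((star (u i) * a) * u j)) * star (u j)) := Finset.sum_comm
    _ = ∑ j, a * (u j * star (u j)) := Finset.sum_congr rfl (fun j _ => (rhs j).symm)

end QBlayer

section CentralScalar

variable {A : Type u} [CStarAlgebra A]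

lemma s6_central_scalar (hA : IsSimpleCStar A) {z : A} (hz : ∀ a, z * a = a * z) :
    ∃ μ : ℂ, μ ∈ spectrum ℂ z ∧ z = μ • (1:A) := by
  haveI : Nontrivial A := hA.1
  obtain ⟨μ, hμ⟩ := spectrum.nonempty z
  refine ⟨μ, hμ, ?_⟩
  set d := z - μ • (1:A) with hd
  have hdc : ∀ a : A, d * a = a * d := by
    intro a
    simp only [hd, sub_mul, mul_sub, hz a, smul_mul_assoc, one_mul, mul_smul_comm, mul_one]
  set Sm : Submodule ℂ A := LinearMap.range (LinearMap.mulRight ℂ d) with hSm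
  set K := Sm.topologicalClosure with hK
  have hmul_left : ∀ (x y : A), y ∈ K → x * y ∈ K := by
    intro x y hy
    have hcont : Continuous (fun w : A => x * w) := continuous_const.mul continuous_id
    have hmaps : Set.MapsTo (fun w : A => x * w) (Sm : Set A) (Sm : Set A) := by
      rintro w ⟨a, rfl⟩
      exact ⟨x * a, by simp [LinearMap.mulRight_apply, mul_assoc]⟩
    exact map_mem_closure hcont hy hmaps
  have hmul_right : ∀ (x y : A), x ∈ K → x * y ∈ K := by
    intro x y hx
    have hcont : Continuous (fun w : A => w * y) := continuous_id.mul continuous_const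
    have hmaps : Set.MapsTo (fun w : A => w * y) (Sm : Set A) (Sm : Set A) := by
      rintro w ⟨a, rfl⟩
      refine ⟨a * y, ?_⟩
      simp only [LinearMap.mulRight_apply]
      rw [mul_assoc, ← hdc y, ← mul_assoc]
    have := map_mem_closure hcont hx hmaps
    exact this
  set J : TwoSidedIdeal A := TwoSidedIdeal.mk' (K : Set A) K.zero_mem
      (fun {x y} hx hy => K.add_mem hx hy)
      (fun {x} hx => K.neg_mem hx)
      (fun {x y} hy => hmul_left x y hy)
      (fun {x y} hx => hmul_right x y hx) with hJ
  have hJset : (J : Set A) = (K : Set A) := by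
    ext w
    simp [hJ, TwoSidedIdeal.mem_mk', SetLike.mem_coe]
  have hJclosed : IsClosed (J : Set A) := by
    rw [hJset]
    exact Sm.isClosed_topologicalClosure
  have hdK : d ∈ K := by
    refine Sm.le_topologicalClosure ?_
    exact ⟨1, by simp [LinearMap.mulRight_apply]⟩
  rcases hA.2 J hJclosed with h0 | huniv
  · have : d ∈ (J : Set A) := by rw [hJset]; exact hdK
    rw [h0] at this
    have hd0 : d = 0 := this
    rw [hd] at hd0
    exact sub_eq_zero.mp hd0
  · exfalso
    have h1K : (1:A) ∈ K := by
      have : (1:A) ∈ (J : Set A) := by rw [huniv]; trivial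
      rwa [hJset] at this
    obtain ⟨y, hyS, hy1⟩ : ∃ y ∈ (Sm : Set A), ‖(1:A) - y‖ < 1 := by
      rcases Metric.mem_closure_iff.mp h1K 1 one_pos with ⟨y, hyS, hdist⟩
      exact ⟨y, hyS, by rwa [dist_eq_norm] at hdist⟩
    obtain ⟨a, rfl⟩ := hyS
    rw [LinearMap.mulRight_apply] at hy1
    have hu : IsUnit (a * d) := by
      have := isUnit_one_sub_of_norm_lt_one (x := (1:A) - a * d) (by simpa using hy1)
      simpa using this
    obtain ⟨v, hv⟩ := hu
    have hud : IsUnit d := by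
      refine isUnit_iff_exists.mpr ⟨↑v⁻¹ * a, ?_, ?_⟩
      · calc d * (↑v⁻¹ * a) = (↑v⁻¹ : A) * d * a := by rw [← mul_assoc, hdc]
          _ = (↑v⁻¹ : A) * (a * d) := by rw [mul_assoc, hdc]
          _ = (↑v⁻¹ : A) * ↑v := by rw [hv]
          _ = 1 := v.inv_mul
      · calc (↑v⁻¹ : A) * a * d = (↑v⁻¹ : A) * (a * d) := by rw [mul_assoc]
          _ = (↑v⁻¹ : A) * ↑v := by rw [hv]
          _ = 1 := v.inv_mul
    rw [spectrum.mem_iff] at hμ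
    refine hμ ?_
    have : algebraMap ℂ A μ - z = -d := by
      rw [hd, Algebra.algebraMap_eq_smul_one, neg_sub]
    rw [this]
    exact hud.neg

end CentralScalar

section Flayer

variable {P A : Type u} [CStarAlgebra P] [CStarAlgebra A]

/-- Abbreviation for the induced map on sequence algebras. -/
noncomputable def s6F (ι : P →⋆ₐ[ℂ] A) (E : CondExpectation ι) : SeqAlg A →ₗ[ℂ] SeqAlg A :=
  mapSeq E.selfMap E.selfMap_contractive

variable (ι : P →⋆ₐ[ℂ] A) (E : CondExpectation ι)

lemma s6_selfMap_apply (x : A) : E.selfMap x = ι (E.toFun x) := rfl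

lemma s6F_mk (f : BddSeq A) :
    s6F ι E (s6mk f) = s6mk (mapBdd E.selfMap E.selfMap_contractive f) :=
  rfl

lemma s6F_star (w : SeqAlg A) : s6F ι E (star w) = star (s6F ι E w) := by
  obtain ⟨f, rfl⟩ := s6mk_surj w
  rw [← s6mk_star, s6F_mk, s6F_mk, ← s6mk_star]
  congr 1
  refine Subtype.ext (funext fun m => ?_)
  show E.selfMap (star ((f : ℕ → A) m)) = star (E.selfMap ((f : ℕ → A) m))
  rw [s6_selfMap_apply, s6_selfMap_apply, s6_Estar ι E, map_star]

lemma s6F_left (v w : SeqAlg A) : s6F ι E (s6F ι E v * w) = s6F ι E v * s6F ι E w := by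
  obtain ⟨f, rfl⟩ := s6mk_surj v
  obtain ⟨g, rfl⟩ := s6mk_surj w
  rw [s6F_mk, ← s6mk_mul, s6F_mk, s6F_mk, ← s6mk_mul]
  congr 1
  refine Subtype.ext (funext fun m => ?_)
  show E.selfMap (E.selfMap ((f : ℕ → A) m) * (g : ℕ → A) m)
      = E.selfMap ((f : ℕ → A) m) * E.selfMap ((g : ℕ → A) m)
  rw [s6_selfMap_apply, s6_selfMap_apply, s6_selfMap_apply, s6_Eleft ι E, map_mul]

lemma s6F_right (v w : SeqAlg A) : s6F ι E (w * s6F ι E v) = s6F ι E w * s6F ι E v := by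
  obtain ⟨f, rfl⟩ := s6mk_surj v
  obtain ⟨g, rfl⟩ := s6mk_surj w
  rw [s6F_mk, ← s6mk_mul, s6F_mk, s6F_mk, ← s6mk_mul]
  congr 1
  refine Subtype.ext (funext fun m => ?_)
  show E.selfMap ((g : ℕ → A) m * E.selfMap ((f : ℕ → A) m))
      = E.selfMap ((g : ℕ → A) m) * E.selfMap ((f : ℕ → A) m)
  rw [s6_selfMap_apply, s6_selfMap_apply, s6_selfMap_apply, s6_Eright ι E, map_mul]

lemma s6F_constiota (p : P) : s6F ι E (constSeq A (ι p)) = constSeq A (ι p) := by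
  rw [s6_constSeq_mk, s6F_mk]
  congr 1
  refine Subtype.ext (funext fun m => ?_)
  show E.selfMap (ι p) = ι p
  rw [s6_selfMap_apply, E.fixes]

lemma s6F_qb {n : ℕ} {u : Fin n → A} (hqb : E.IsQuasiBasis u) (w : SeqAlg A) :
    ∑ i, s6F ι E (w * constSeq A (u i)) * constSeq A (star (u i)) = w := by
  obtain ⟨f, rfl⟩ := s6mk_surj w
  have hterm : ∀ i : Fin n,
      s6F ι E (s6mk f * constSeq A (u i)) * constSeq A (star (u i))
      = s6mk (mapBdd E.selfMap E.selfMap_contractive (f * constBdd (u i))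
          * constBdd (star (u i))) := by
    intro i
    rw [s6_constSeq_mk, s6_constSeq_mk, ← s6mk_mul, s6F_mk, ← s6mk_mul]
  rw [Finset.sum_congr rfl (fun i _ => hterm i), ← s6mk_sum]
  congr 1
  refine Subtype.ext (funext fun m => ?_)
  have hcoe : ((∑ i, mapBdd E.selfMap E.selfMap_contractive (f * constBdd (u i))
      * constBdd (star (u i)) : BddSeq A) : ℕ → A) m
      = ∑ i, ι (E.toFun ((f : ℕ → A) m * u i)) * star (u i) := by
    rw [AddSubmonoidClass.coe_finset_sum]
    simp only [Finset.sum_apply]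
    rfl
  rw [hcoe]
  exact hqb ((f : ℕ → A) m)

end Flayer

section KeyLayer

variable {P A : Type u} [CStarAlgebra P] [CStarAlgebra A]

noncomputable instance (A : Type u) [CStarAlgebra A] : StarModule ℂ (SeqAlg A) := by
  constructor
  intro c w
  obtain ⟨f, rfl⟩ := s6mk_surj w
  rw [← s6mk_smul, ← s6mk_star, ← s6mk_star, ← s6mk_smul]
  congr 1
  refine Subtype.ext (funext fun m => ?_)
  show star (c • (f : ℕ → A) m) = star c • star ((f : ℕ → A) m)
  rw [star_smul]

variable (ι : P →⋆ₐ[ℂ] A) (E : CondExpectation ι)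
variable {n : ℕ} {u : Fin n → A} {e : SeqAlg A} {μ : ℂ}

lemma s6_star_ze (hes : star e = e)
    (hcomm : ∀ a : A, constSeq A a * e = e * constSeq A a) (a : A) :
    star (constSeq A a * e) = constSeq A (star a) * e := by
  rw [star_mul, hes, ← map_star (constSeq A) a]
  exact (hcomm (star a)).symm

lemma s6_star_Fze (hes : star e = e)
    (hcomm : ∀ a : A, constSeq A a * e = e * constSeq A a) (a : A) :
    star (s6F ι E (constSeq A a * e)) = s6F ι E (constSeq A (star a) * e) := by
  rw [← s6F_star, s6_star_ze hes hcomm a]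

lemma s6_e_expand (hqb : E.IsQuasiBasis u)
    (hcomm : ∀ a : A, constSeq A a * e = e * constSeq A a) :
    e = ∑ i, s6F ι E (constSeq A (u i) * e) * constSeq A (star (u i)) := by
  conv_lhs => rw [← s6F_qb ι E hqb e]
  refine Finset.sum_congr rfl fun i _ => ?_
  rw [← hcomm (u i)]

lemma s6_sum_rule (hqb : E.IsQuasiBasis u) (he2 : e * e = e) (hes : star e = e)
    (hcomm : ∀ a : A, constSeq A a * e = e * constSeq A a) :
    (∑ i, s6F ι E (constSeq A (u i) * e) * star (s6F ι E (constSeq A (u i) * e)))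
      = s6F ι E e := by
  have hq : ∀ i, star (s6F ι E (constSeq A (u i) * e))
      = s6F ι E (constSeq A (star (u i)) * e) :=
    fun i => s6_star_Fze ι E hes hcomm (u i)
  have hee : e * e = (∑ i, s6F ι E (constSeq A (u i) * e) * constSeq A (star (u i))) * e :=
    congrArg (fun w => w * e) (s6_e_expand ι E hqb hcomm)
  calc (∑ i, s6F ι E (constSeq A (u i) * e) * star (s6F ι E (constSeq A (u i) * e)))
      = ∑ i, s6F ι E (constSeq A (u i) * e) * s6F ι E (constSeq A (star (u i)) * e) :=
        Finset.sum_congr rfl fun i _ => by rw [hq i]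
    _ = ∑ i, s6F ι E (s6F ι E (constSeq A (u i) * e) * (constSeq A (star (u i)) * e)) :=
        Finset.sum_congr rfl fun i _ => (s6F_left ι E _ _).symm
    _ = s6F ι E (∑ i, s6F ι E (constSeq A (u i) * e) * (constSeq A (star (u i)) * e)) :=
        (map_sum _ _ _).symm
    _ = s6F ι E (e * e) := by
        rw [hee, Finset.sum_mul]
        congr 1
        exact Finset.sum_congr rfl fun i _ => (mul_assoc _ _ _).symm
    _ = s6F ι E e := by rw [he2]

lemma s6_ece (he2 : e * e = e)
    (hcomm : ∀ a : A, constSeq A a * e = e * constSeq A a) (a : A) :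
    e * (constSeq A a * e) = constSeq A a * e := by
  rw [← mul_assoc, ← hcomm a, mul_assoc, he2]

lemma s6_Dsum_zero (hqb : E.IsQuasiBasis u) (he2 : e * e = e) (hes : star e = e)
    (hcomm : ∀ a : A, constSeq A a * e = e * constSeq A a)
    (hL : μ • (s6F ι E e) = 1)
    (hidx : constSeq A (indexElt u) = μ • (1 : SeqAlg A))
    (hmu : (starRingEnd ℂ) μ = μ) :
    ∑ j, s6F ι E ((constSeq A (u j) * e - μ • (s6F ι E (constSeq A (u j) * e) * e))
      * star (constSeq A (u j) * e - μ • (s6F ι E (constSeq A (u j) * e) * e))) = 0 := by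
  have hq : ∀ j, star (s6F ι E (constSeq A (u j) * e))
      = s6F ι E (constSeq A (star (u j)) * e) :=
    fun j => s6_star_Fze ι E hes hcomm (u j)
  have hterm : ∀ j, s6F ι E ((constSeq A (u j) * e - μ • (s6F ι E (constSeq A (u j) * e) * e))
      * star (constSeq A (u j) * e - μ • (s6F ι E (constSeq A (u j) * e) * e)))
      = s6F ι E (constSeq A (u j * star (u j)) * e)
        - μ • (s6F ι E (constSeq A (u j) * e) * star (s6F ι E (constSeq A (u j) * e)))
        - μ • (s6F ι E (constSeq A (u j) * e) * star (s6F ι E (constSeq A (u j) * e)))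
        + (μ * μ) • (s6F ι E (constSeq A (u j) * e)
            * (s6F ι E e * star (s6F ι E (constSeq A (u j) * e)))) := by
    intro j
    set Q : SeqAlg A := s6F ι E (constSeq A (u j) * e) with hQ
    have hsX : star (constSeq A (u j) * e - μ • (Q * e))
        = constSeq A (star (u j)) * e - μ • (e * star Q) := by
      rw [star_sub, s6_star_ze hes hcomm (u j), star_smul, star_mul, hes]
      rw [show (star μ : ℂ) = μ from hmu]
    have hexp : (constSeq A (u j) * e - μ • (Q * e))
        * star (constSeq A (u j) * e - μ • (Q * e))
        = (constSeq A (u j) * e) * (constSeq A (star (u j)) * e)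
          - μ • ((constSeq A (u j) * e) * (e * star Q))
          - μ • ((Q * e) * (constSeq A (star (u j)) * e))
          + (μ * μ) • ((Q * e) * (e * star Q)) := by
      rw [hsX]
      simp only [sub_mul, mul_sub, smul_mul_assoc, mul_smul_comm, smul_smul, smul_sub]
      abel
    rw [hexp, map_add, map_sub, map_sub, map_smul, map_smul, map_smul]
    have p1 : (constSeq A (u j) * e) * (constSeq A (star (u j)) * e)
        = constSeq A (u j * star (u j)) * e := by
      rw [mul_assoc, s6_ece he2 hcomm (star (u j)), ← mul_assoc, ← map_mul]
    have p2 : (constSeq A (u j) * e) * (e * star Q) = (constSeq A (u j) * e) * star Q := by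
      rw [← mul_assoc, mul_assoc (constSeq A (u j)) e e, he2]
    have p3 : (Q * e) * (constSeq A (star (u j)) * e) = Q * (constSeq A (star (u j)) * e) := by
      rw [mul_assoc, s6_ece he2 hcomm (star (u j))]
    have p4 : (Q * e) * (e * star Q) = Q * (e * star Q) := by
      rw [mul_assoc, ← mul_assoc e e (star Q), he2]
    rw [p1, p2, p3, p4]
    have f2 : s6F ι E ((constSeq A (u j) * e) * star Q) = Q * star Q := by
      conv_lhs => rw [show (star Q : SeqAlg A) = s6F ι E (constSeq A (star (u j)) * e) from hq j]
      rw [s6F_right]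
      rw [← hQ, ← hq j]
    have f3 : s6F ι E (Q * (constSeq A (star (u j)) * e)) = Q * star Q := by
      conv_lhs => rw [hQ]
      rw [s6F_left, ← hQ, ← hq j]
    have f4 : s6F ι E (Q * (e * star Q)) = Q * (s6F ι E e * star Q) := by
      have h2 : s6F ι E (e * star Q) = s6F ι E e * star Q := by
        conv_lhs => rw [show (star Q : SeqAlg A) = s6F ι E (constSeq A (star (u j)) * e) from hq j]
        rw [s6F_right, ← hq j]
      conv_lhs => rw [hQ]
      rw [s6F_left, ← hQ, h2]
    rw [f2, f3, f4]
  rw [Finset.sum_congr rfl (fun j _ => hterm j)]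
  rw [Finset.sum_add_distrib, Finset.sum_sub_distrib, Finset.sum_sub_distrib,
    ← Finset.smul_sum, ← Finset.smul_sum]
  have hA1 : (∑ j, s6F ι E (constSeq A (u j * star (u j)) * e)) = μ • s6F ι E e := by
    rw [← map_sum]
    have harg : (∑ j, constSeq A (u j * star (u j)) * e) = μ • e := by
      rw [← Finset.sum_mul, ← map_sum]
      have hh : (∑ j, u j * star (u j)) = indexElt u := rfl
      rw [hh, hidx, smul_mul_assoc, one_mul]
    rw [harg, map_smul]
  have hA4 : (μ * μ) • (∑ j, s6F ι E (constSeq A (u j) * e)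
      * (s6F ι E e * star (s6F ι E (constSeq A (u j) * e))))
      = μ • s6F ι E e := by
    rw [← smul_smul, Finset.smul_sum]
    have hh : ∀ j, μ • (s6F ι E (constSeq A (u j) * e)
        * (s6F ι E e * star (s6F ι E (constSeq A (u j) * e))))
        = s6F ι E (constSeq A (u j) * e) * star (s6F ι E (constSeq A (u j) * e)) := by
      intro j
      rw [← mul_smul_comm, ← smul_mul_assoc, hL, one_mul]
    rw [Finset.sum_congr rfl (fun j _ => hh j)]
    rw [s6_sum_rule ι E hqb he2 hes hcomm]
  rw [hA1, s6_sum_rule ι E hqb he2 hes hcomm, hA4]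
  abel

lemma s6_Dzero (hqb : E.IsQuasiBasis u) (he2 : e * e = e) (hes : star e = e)
    (hcomm : ∀ a : A, constSeq A a * e = e * constSeq A a)
    (hL : μ • (s6F ι E e) = 1)
    (hidx : constSeq A (indexElt u) = μ • (1 : SeqAlg A))
    (hmu : (starRingEnd ℂ) μ = μ) (i : Fin n) :
    constSeq A (u i) * e = μ • (s6F ι E (constSeq A (u i) * e) * e) := by
  obtain ⟨ee, hee⟩ := s6mk_surj e
  set df : Fin n → BddSeq A := fun j =>
    constBdd (u j) * ee - μ • (mapBdd E.selfMap E.selfMap_contractive (constBdd (u j) * ee) * ee)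
    with hdf
  have h1 : ∀ j, s6mk (constBdd (u j) * ee) = constSeq A (u j) * e := by
    intro j
    rw [s6mk_mul, ← s6_constSeq_mk, hee]
  have h2 : ∀ j, s6mk (mapBdd E.selfMap E.selfMap_contractive (constBdd (u j) * ee))
      = s6F ι E (constSeq A (u j) * e) := by
    intro j
    rw [← s6F_mk, h1 j]
  have hDrep : ∀ j, constSeq A (u j) * e - μ • (s6F ι E (constSeq A (u j) * e) * e)
      = s6mk (df j) := by
    intro j
    simp only [hdf]
    rw [s6mk_sub, s6mk_smul,
      s6mk_mul (mapBdd E.selfMap E.selfMap_contractive (constBdd (u j) * ee)) ee,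
      h2 j, h1 j, hee]
  have hsum0 := s6_Dsum_zero ι E hqb he2 hes hcomm hL hidx hmu
  have hFG : s6F ι E (s6mk (∑ j, df j * star (df j))) = 0 := by
    rw [s6mk_sum, map_sum, ← hsum0]
    refine Finset.sum_congr rfl fun j _ => ?_
    rw [hDrep j, ← s6mk_star, ← s6mk_mul]
  have hGcomp : Tendsto (fun m => ‖ι (E.toFun
      (((∑ j, df j * star (df j) : BddSeq A) : ℕ → A) m))‖) atTop (𝓝 0) := by
    rw [s6F_mk] at hFG
    exact s6mk_eq_zero_iff.mp hFG
  have hpos : ∀ (j : Fin n) (m : ℕ),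
      (0:P) ≤ E.toFun (((df j : ℕ → A) m) * star ((df j : ℕ → A) m)) :=
    fun j m => s6_Epos ι E (mul_star_self_nonneg _)
  have hle : ∀ m : ℕ, ‖ι (E.toFun ((df i : ℕ → A) m * star ((df i : ℕ → A) m)))‖
      ≤ ‖ι (E.toFun (((∑ j, df j * star (df j) : BddSeq A) : ℕ → A) m))‖ := by
    intro m
    have hsumcoe : ((∑ j, df j * star (df j) : BddSeq A) : ℕ → A) m
        = ∑ j, ((df j : ℕ → A) m * star ((df j : ℕ → A) m)) := by
      rw [AddSubmonoidClass.coe_finset_sum]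
      simp only [Finset.sum_apply]
      rfl
    have hmono : E.toFun ((df i : ℕ → A) m * star ((df i : ℕ → A) m))
        ≤ E.toFun (((∑ j, df j * star (df j) : BddSeq A) : ℕ → A) m) := by
      rw [hsumcoe, map_sum]
      exact Finset.single_le_sum (fun j _ => hpos j m) (Finset.mem_univ i)
    exact CStarAlgebra.norm_le_norm_of_nonneg_of_le (s6_iota_pos ι (hpos i m))
      (s6_iota_mono ι hmono)
  have hdfi : Tendsto (fun m => ‖(df i : ℕ → A) m‖) atTop (𝓝 0) :=
    s6_pp_tendsto ι E hqb _ (squeeze_zero (fun m => norm_nonneg _) hle hGcomp)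
  have hD0 : s6mk (df i) = 0 := s6mk_eq_zero_iff.mpr hdfi
  exact sub_eq_zero.mp ((hDrep i).trans hD0)

lemma s6_KEY (hqb : E.IsQuasiBasis u) (he2 : e * e = e) (hes : star e = e)
    (hcomm : ∀ a : A, constSeq A a * e = e * constSeq A a)
    (hL : μ • (s6F ι E e) = 1)
    (hidx : constSeq A (indexElt u) = μ • (1 : SeqAlg A))
    (hmu : (starRingEnd ℂ) μ = μ) (x : A) :
    constSeq A x * e = μ • (s6F ι E (constSeq A x * e) * e) := by
  have hxdec : constSeq A x
      = ∑ i, constSeq A (u i) * constSeq A (ι (E.toFun (star (u i) * x))) := by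
    conv_lhs => rw [← s6_left_qb ι E hqb x]
    rw [map_sum]
    exact Finset.sum_congr rfl fun i _ => by rw [map_mul]
  have hstep : constSeq A x * e
      = μ • ((∑ i, s6F ι E (constSeq A (u i) * e)
          * constSeq A (ι (E.toFun (star (u i) * x)))) * e) := by
    calc constSeq A x * e
        = ∑ i, (constSeq A (u i) * constSeq A (ι (E.toFun (star (u i) * x)))) * e := by
          rw [hxdec, Finset.sum_mul]
      _ = ∑ i, (constSeq A (u i) * e) * constSeq A (ι (E.toFun (star (u i) * x))) := by
          refine Finset.sum_congr rfl fun i _ => ?_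
          rw [mul_assoc, hcomm (ι (E.toFun (star (u i) * x))), ← mul_assoc]
      _ = ∑ i, (μ • (s6F ι E (constSeq A (u i) * e) * e))
            * constSeq A (ι (E.toFun (star (u i) * x))) := by
          refine Finset.sum_congr rfl fun i _ => ?_
          rw [← s6_Dzero ι E hqb he2 hes hcomm hL hidx hmu i]
      _ = μ • ((∑ i, s6F ι E (constSeq A (u i) * e)
            * constSeq A (ι (E.toFun (star (u i) * x)))) * e) := by
          rw [Finset.sum_mul, Finset.smul_sum]
          refine Finset.sum_congr rfl fun i _ => ?_
          rw [smul_mul_assoc]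
          congr 1
          rw [mul_assoc, ← hcomm (ι (E.toFun (star (u i) * x))), ← mul_assoc]
  set G : SeqAlg A := ∑ i, s6F ι E (constSeq A (u i) * e)
      * constSeq A (ι (E.toFun (star (u i) * x))) with hG
  have hFze : s6F ι E (constSeq A x * e) = μ • (G * s6F ι E e) := by
    rw [hstep, map_smul]
    congr 1
    rw [hG, Finset.sum_mul, map_sum, Finset.sum_mul]
    refine Finset.sum_congr rfl fun i _ => ?_
    have hZ : s6F ι E (constSeq A (ι (E.toFun (star (u i) * x))))
        = constSeq A (ι (E.toFun (star (u i) * x))) := s6F_constiota ι E _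
    calc s6F ι E ((s6F ι E (constSeq A (u i) * e)
          * constSeq A (ι (E.toFun (star (u i) * x)))) * e)
        = s6F ι E (s6F ι E (constSeq A (u i) * e)
            * (constSeq A (ι (E.toFun (star (u i) * x))) * e)) := by rw [mul_assoc]
      _ = s6F ι E (constSeq A (u i) * e)
            * s6F ι E (constSeq A (ι (E.toFun (star (u i) * x))) * e) := s6F_left ι E _ _
      _ = s6F ι E (constSeq A (u i) * e)
            * (constSeq A (ι (E.toFun (star (u i) * x))) * s6F ι E e) := by
          congr 1
          conv_lhs => rw [show constSeq A (ι (E.toFun (star (u i) * x))) * e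
              = s6F ι E (constSeq A (ι (E.toFun (star (u i) * x)))) * e from by rw [hZ]]
          rw [s6F_left, hZ]
      _ = (s6F ι E (constSeq A (u i) * e)
            * constSeq A (ι (E.toFun (star (u i) * x)))) * s6F ι E e := by rw [mul_assoc]
  rw [hFze, hstep]
  congr 1
  rw [smul_mul_assoc, mul_assoc, ← mul_smul_comm, ← smul_mul_assoc, hL, one_mul]

lemma s6_eQe (hqb : E.IsQuasiBasis u) (he2 : e * e = e) (hes : star e = e)
    (hcomm : ∀ a : A, constSeq A a * e = e * constSeq A a)
    (hL : μ • (s6F ι E e) = 1)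
    (hidx : constSeq A (indexElt u) = μ • (1 : SeqAlg A))
    (hmu : (starRingEnd ℂ) μ = μ) (hmu0 : μ ≠ 0) (x : A) :
    e * (s6F ι E (constSeq A x * e) * e) = s6F ι E (constSeq A x * e) * e := by
  have hKx := s6_KEY ι E hqb he2 hes hcomm hL hidx hmu x
  have h1 : e * (constSeq A x * e) = constSeq A x * e := s6_ece he2 hcomm x
  rw [hKx, mul_smul_comm] at h1
  have h2 := congrArg (fun w => μ⁻¹ • w) h1
  simpa [smul_smul, inv_mul_cancel₀ hmu0] using h2

lemma s6_commQ (hqb : E.IsQuasiBasis u) (he2 : e * e = e) (hes : star e = e)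
    (hcomm : ∀ a : A, constSeq A a * e = e * constSeq A a)
    (hL : μ • (s6F ι E e) = 1)
    (hidx : constSeq A (indexElt u) = μ • (1 : SeqAlg A))
    (hmu : (starRingEnd ℂ) μ = μ) (hmu0 : μ ≠ 0) (x : A) :
    e * s6F ι E (constSeq A x * e) = s6F ι E (constSeq A x * e) * e := by
  have ha := s6_eQe ι E hqb he2 hes hcomm hL hidx hmu hmu0 x
  have hb := s6_eQe ι E hqb he2 hes hcomm hL hidx hmu hmu0 (star x)
  have hsQ : s6F ι E (constSeq A (star x) * e) = star (s6F ι E (constSeq A x * e)) :=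
    (s6_star_Fze ι E hes hcomm x).symm
  rw [hsQ] at hb
  have hb' := congrArg star hb
  simp only [star_mul, star_star, hes] at hb'
  rw [← mul_assoc] at ha
  -- hb' should read : e * s6F ... * e = e * s6F ...  (associativity shapes)
  calc e * s6F ι E (constSeq A x * e)
      = e * s6F ι E (constSeq A x * e) * e := hb'.symm
    _ = s6F ι E (constSeq A x * e) * e := ha

lemma s6_prod (hqb : E.IsQuasiBasis u) (he2 : e * e = e) (hes : star e = e)
    (hcomm : ∀ a : A, constSeq A a * e = e * constSeq A a)
    (hL : μ • (s6F ι E e) = 1)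
    (hidx : constSeq A (indexElt u) = μ • (1 : SeqAlg A))
    (hmu : (starRingEnd ℂ) μ = μ) (hmu0 : μ ≠ 0) (x a : A) :
    s6F ι E (constSeq A (x * a) * e)
      = μ • (s6F ι E (constSeq A x * e) * s6F ι E (constSeq A a * e)) := by
  have hKa := s6_KEY ι E hqb he2 hes hcomm hL hidx hmu a
  have hc := s6_commQ ι E hqb he2 hes hcomm hL hidx hmu hmu0 a
  have h1 : constSeq A (x * a) * e
      = μ • ((constSeq A x * e) * s6F ι E (constSeq A a * e)) := by
    calc constSeq A (x * a) * e = constSeq A x * (constSeq A a * e) := by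
          rw [map_mul, mul_assoc]
      _ = constSeq A x * (μ • (s6F ι E (constSeq A a * e) * e)) := by rw [← hKa]
      _ = μ • (constSeq A x * (s6F ι E (constSeq A a * e) * e)) := (mul_smul_comm _ _ _)
      _ = μ • (constSeq A x * (e * s6F ι E (constSeq A a * e))) := by rw [← hc]
      _ = μ • ((constSeq A x * e) * s6F ι E (constSeq A a * e)) := by rw [mul_assoc]
  rw [h1, map_smul]
  congr 1
  exact s6F_right ι E _ _

end KeyLayer

end Statement6Aux

/-- Let `P ⊆ A` be an inclusion of separable unital C*-algebras and
`E : A → P` a faithful conditional expectation of index-finite type with the Rokhlin property.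
If `A` is simple, then `P` is simple. -/
theorem statement6 {P A : Type u} [CStarAlgebra P] [CStarAlgebra A]
    (hPsep : TopologicalSpace.SeparableSpace P) (hAsep : TopologicalSpace.SeparableSpace A)
    (ι : P →⋆ₐ[ℂ] A) (hι : Function.Injective ι)
    (E : CondExpectation ι) (hEf : E.Faithful) (hfin : E.IndexFiniteType)
    (hrok : E.RokhlinProperty)
    (hAsimple : IsSimpleCStar A) :
    IsSimpleCStar P := by
  classical
  haveI hntA : Nontrivial A := hAsimple.1
  have hntP : Nontrivial P := by
    refine ⟨1, 0, fun h => ?_⟩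
    have h1 : (1 : A) = 0 := by rw [← map_one ι, h, map_zero]
    exact one_ne_zero h1
  obtain ⟨n, u, hqb, e, hproj, hcommC, hL0, hR0, hinj⟩ := hrok
  obtain ⟨he2, hes⟩ := hproj
  have hcomm : ∀ a : A, constSeq A a * e = e * constSeq A a := fun a => (hcommC a).eq
  have hZ : ∀ a : A, indexElt u * a = a * indexElt u := s6_central ι E hqb
  obtain ⟨μ, hμspec, hc⟩ := s6_central_scalar hAsimple hZ
  have hmu : (starRingEnd ℂ) μ = μ := by
    have hsa : star (indexElt u) = indexElt u := s6_indexElt_sa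
    rw [hc, star_smul, star_one] at hsa
    have hinj1 : Function.Injective (algebraMap ℂ A) := RingHom.injective _
    apply hinj1
    rw [Algebra.algebraMap_eq_smul_one, Algebra.algebraMap_eq_smul_one]
    exact hsa
  have hL0' : constSeq A (indexElt u) * s6F ι E e = 1 := hL0
  have hidx : constSeq A (indexElt u) = μ • (1 : SeqAlg A) := by
    rw [hc, map_smul, map_one]
  have hL : μ • s6F ι E e = 1 := by
    rw [← hL0', hidx, smul_mul_assoc, one_mul]
  have hmu0 : μ ≠ 0 := by
    intro h
    rw [h, zero_smul] at hL
    have h10 : s6mk (1 : BddSeq A) = (0 : SeqAlg A) := by rw [s6mk_one, ← hL]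
    have ht := s6mk_eq_zero_iff.mp h10
    simp only [s6_coe_one] at ht
    have h1 : ‖(1 : A)‖ = 0 := tendsto_nhds_unique tendsto_const_nhds ht
    exact one_ne_zero (norm_eq_zero.mp h1)
  obtain ⟨ee, hee⟩ := s6mk_surj e
  obtain ⟨C, hC⟩ := ee.2
  have hC0 : (0 : ℝ) ≤ C := le_trans (norm_nonneg _) (hC 0)
  have hFcomp : ∀ x : A, s6F ι E (constSeq A x * e)
      = s6mk (mapBdd E.selfMap E.selfMap_contractive (constBdd x * ee)) := by
    intro x
    rw [s6_constSeq_mk, ← hee, ← s6mk_mul, s6F_mk]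
  have hprod : ∀ x a : A, Tendsto (fun m => ‖ι (E.toFun ((x * a) * (ee : ℕ → A) m))
      - μ • (ι (E.toFun (x * (ee : ℕ → A) m)) * ι (E.toFun (a * (ee : ℕ → A) m)))‖)
      atTop (𝓝 0) := by
    intro x a
    have h := s6_prod ι E hqb he2 hes hcomm hL hidx hmu hmu0 x a
    rw [hFcomp (x * a), hFcomp x, hFcomp a, ← s6mk_mul, ← s6mk_smul] at h
    exact s6mk_eq_iff.mp h
  have hbound : ∀ (x : A) (m : ℕ), ‖ι (E.toFun (x * (ee : ℕ → A) m))‖ ≤ ‖x‖ * C := by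
    intro x m
    calc ‖ι (E.toFun (x * (ee : ℕ → A) m))‖ ≤ ‖E.toFun (x * (ee : ℕ → A) m)‖ :=
        NonUnitalStarAlgHom.norm_apply_le ι _
      _ ≤ ‖x * (ee : ℕ → A) m‖ := E.contractive _
      _ ≤ ‖x‖ * ‖(ee : ℕ → A) m‖ := norm_mul_le _ _
      _ ≤ ‖x‖ * C := mul_le_mul_of_nonneg_left (hC m) (norm_nonneg x)
  refine ⟨hntP, ?_⟩
  intro I hIclosed
  set T : Set A := ι '' (I : Set P) with hT
  have hTne : T.Nonempty := ⟨ι 0, ⟨0, I.zero_mem, rfl⟩⟩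
  have h0T : (0 : A) ∈ T := ⟨0, I.zero_mem, map_zero ι⟩
  have hpert : ∀ v w : A, Metric.infDist v T ≤ Metric.infDist w T + ‖v - w‖ := by
    intro v w
    rw [← dist_eq_norm]
    exact Metric.infDist_le_infDist_add_dist
  have haddT : ∀ v w : A, Metric.infDist (v + w) T
      ≤ Metric.infDist v T + Metric.infDist w T := by
    intro v w
    refine le_of_forall_pos_le_add fun ε hε => ?_
    obtain ⟨t1, ht1, hd1⟩ := (Metric.infDist_lt_iff hTne).mp
      (lt_add_of_pos_right (Metric.infDist v T) (by positivity : (0:ℝ) < ε / 2))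
    obtain ⟨t2, ht2, hd2⟩ := (Metric.infDist_lt_iff hTne).mp
      (lt_add_of_pos_right (Metric.infDist w T) (by positivity : (0:ℝ) < ε / 2))
    obtain ⟨p1, hp1, rfl⟩ := ht1
    obtain ⟨p2, hp2, rfl⟩ := ht2
    have hmem : ι p1 + ι p2 ∈ T := ⟨p1 + p2, I.add_mem hp1 hp2, map_add ι p1 p2⟩
    calc Metric.infDist (v + w) T ≤ dist (v + w) (ι p1 + ι p2) :=
        Metric.infDist_le_dist_of_mem hmem
      _ ≤ dist v (ι p1) + dist w (ι p2) := dist_add_add_le _ _ _ _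
      _ ≤ (Metric.infDist v T + ε / 2) + (Metric.infDist w T + ε / 2) :=
        add_le_add hd1.le hd2.le
      _ = Metric.infDist v T + Metric.infDist w T + ε := by ring
  have hnegT : ∀ v : A, Metric.infDist (-v) T ≤ Metric.infDist v T := by
    intro v
    refine le_of_forall_pos_le_add fun ε hε => ?_
    obtain ⟨t, htT, hd⟩ := (Metric.infDist_lt_iff hTne).mp
      (lt_add_of_pos_right (Metric.infDist v T) hε)
    obtain ⟨p, hp, rfl⟩ := htT
    have hmem : -ι p ∈ T := ⟨-p, I.neg_mem hp, map_neg ι p⟩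
    calc Metric.infDist (-v) T ≤ dist (-v) (-ι p) := Metric.infDist_le_dist_of_mem hmem
      _ = dist v (ι p) := dist_neg_neg _ _
      _ ≤ Metric.infDist v T + ε := hd.le
  have hmulL : ∀ (q : P) (y : A) (K : ℝ), 0 ≤ K → ‖q‖ ≤ K →
      Metric.infDist (μ • (ι q * y)) T ≤ (‖μ‖ * K) * Metric.infDist y T := by
    intro q y K hK0 hqK
    refine le_of_forall_pos_le_add fun ε hε => ?_
    set δ := ε / (‖μ‖ * K + 1) with hδdef
    have hδ0 : 0 < δ := by positivity
    obtain ⟨t, htT, hd⟩ := (Metric.infDist_lt_iff hTne).mp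
      (lt_add_of_pos_right (Metric.infDist y T) hδ0)
    obtain ⟨p, hp, rfl⟩ := htT
    have hmemI : μ • (q * p) ∈ I := by
      rw [Algebra.smul_def]
      exact I.mul_mem_left _ _ (I.mul_mem_left _ _ hp)
    have hmem : μ • (ι q * ι p) ∈ T := ⟨μ • (q * p), hmemI, by rw [map_smul, map_mul]⟩
    have hd' : ‖y - ι p‖ ≤ Metric.infDist y T + δ := by
      rw [← dist_eq_norm]; exact hd.le
    have hfin : (‖μ‖ * K) * δ ≤ ε := by
      rw [hδdef]
      calc (‖μ‖ * K) * (ε / (‖μ‖ * K + 1)) ≤ (‖μ‖ * K + 1) * (ε / (‖μ‖ * K + 1)) := by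
            refine mul_le_mul_of_nonneg_right (by linarith) (by positivity)
        _ = ε := by field_simp
    calc Metric.infDist (μ • (ι q * y)) T ≤ dist (μ • (ι q * y)) (μ • (ι q * ι p)) :=
        Metric.infDist_le_dist_of_mem hmem
      _ = ‖μ • (ι q * (y - ι p))‖ := by rw [dist_eq_norm, ← smul_sub, ← mul_sub]
      _ ≤ ‖μ‖ * (‖ι q‖ * ‖y - ι p‖) := by
          rw [norm_smul]
          exact mul_le_mul_of_nonneg_left (norm_mul_le _ _) (norm_nonneg μ)
      _ ≤ ‖μ‖ * (K * ‖y - ι p‖) := by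
          refine mul_le_mul_of_nonneg_left
            (mul_le_mul_of_nonneg_right ?_ (norm_nonneg _)) (norm_nonneg μ)
          exact le_trans (NonUnitalStarAlgHom.norm_apply_le ι q) hqK
      _ = (‖μ‖ * K) * ‖y - ι p‖ := by ring
      _ ≤ (‖μ‖ * K) * (Metric.infDist y T + δ) :=
          mul_le_mul_of_nonneg_left hd' (by positivity)
      _ = (‖μ‖ * K) * Metric.infDist y T + (‖μ‖ * K) * δ := by ring
      _ ≤ (‖μ‖ * K) * Metric.infDist y T + ε := by linarith
  have hmulR : ∀ (q : P) (y : A) (K : ℝ), 0 ≤ K → ‖q‖ ≤ K →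
      Metric.infDist (μ • (y * ι q)) T ≤ (‖μ‖ * K) * Metric.infDist y T := by
    intro q y K hK0 hqK
    refine le_of_forall_pos_le_add fun ε hε => ?_
    set δ := ε / (‖μ‖ * K + 1) with hδdef
    have hδ0 : 0 < δ := by positivity
    obtain ⟨t, htT, hd⟩ := (Metric.infDist_lt_iff hTne).mp
      (lt_add_of_pos_right (Metric.infDist y T) hδ0)
    obtain ⟨p, hp, rfl⟩ := htT
    have hmemI : μ • (p * q) ∈ I := by
      rw [Algebra.smul_def]
      exact I.mul_mem_left _ _ (I.mul_mem_right _ _ hp)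
    have hmem : μ • (ι p * ι q) ∈ T := ⟨μ • (p * q), hmemI, by rw [map_smul, map_mul]⟩
    have hd' : ‖y - ι p‖ ≤ Metric.infDist y T + δ := by
      rw [← dist_eq_norm]; exact hd.le
    have hfin : (‖μ‖ * K) * δ ≤ ε := by
      rw [hδdef]
      calc (‖μ‖ * K) * (ε / (‖μ‖ * K + 1)) ≤ (‖μ‖ * K + 1) * (ε / (‖μ‖ * K + 1)) := by
            refine mul_le_mul_of_nonneg_right (by linarith) (by positivity)
        _ = ε := by field_simp
    calc Metric.infDist (μ • (y * ι q)) T ≤ dist (μ • (y * ι q)) (μ • (ι p * ι q)) :=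
        Metric.infDist_le_dist_of_mem hmem
      _ = ‖μ • ((y - ι p) * ι q)‖ := by rw [dist_eq_norm, ← smul_sub, ← sub_mul]
      _ ≤ ‖μ‖ * (‖y - ι p‖ * ‖ι q‖) := by
          rw [norm_smul]
          exact mul_le_mul_of_nonneg_left (norm_mul_le _ _) (norm_nonneg μ)
      _ ≤ ‖μ‖ * (‖y - ι p‖ * K) := by
          refine mul_le_mul_of_nonneg_left
            (mul_le_mul_of_nonneg_left ?_ (norm_nonneg _)) (norm_nonneg μ)
          exact le_trans (NonUnitalStarAlgHom.norm_apply_le ι q) hqK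
      _ = (‖μ‖ * K) * ‖y - ι p‖ := by ring
      _ ≤ (‖μ‖ * K) * (Metric.infDist y T + δ) :=
          mul_le_mul_of_nonneg_left hd' (by positivity)
      _ = (‖μ‖ * K) * Metric.infDist y T + (‖μ‖ * K) * δ := by ring
      _ ≤ (‖μ‖ * K) * Metric.infDist y T + ε := by linarith
  -- The transferred ideal
  set NS : Set A := {a : A |
    Tendsto (fun m => Metric.infDist (ι (E.toFun (a * (ee : ℕ → A) m))) T) atTop (𝓝 0)}
    with hNS
  have hNzero : (0 : A) ∈ NS := by
    have hz : (fun m => Metric.infDist (ι (E.toFun ((0:A) * (ee : ℕ → A) m))) T)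
        = fun _ => (0:ℝ) := by
      funext m
      rw [zero_mul, map_zero, map_zero]
      exact Metric.infDist_zero_of_mem h0T
    show Tendsto _ atTop (𝓝 0)
    rw [hz]
    exact tendsto_const_nhds
  have hNadd : ∀ a b : A, a ∈ NS → b ∈ NS → a + b ∈ NS := by
    intro a b ha hb
    have hstep : ∀ m, Metric.infDist (ι (E.toFun ((a + b) * (ee : ℕ → A) m))) T
        ≤ Metric.infDist (ι (E.toFun (a * (ee : ℕ → A) m))) T
          + Metric.infDist (ι (E.toFun (b * (ee : ℕ → A) m))) T := by
      intro m
      rw [add_mul, map_add, map_add]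
      exact haddT _ _
    exact squeeze_zero (fun m => Metric.infDist_nonneg) hstep (by simpa using ha.add hb)
  have hNneg : ∀ a : A, a ∈ NS → -a ∈ NS := by
    intro a ha
    have hstep : ∀ m, Metric.infDist (ι (E.toFun ((-a) * (ee : ℕ → A) m))) T
        ≤ Metric.infDist (ι (E.toFun (a * (ee : ℕ → A) m))) T := by
      intro m
      rw [neg_mul, map_neg, map_neg]
      exact hnegT _
    exact squeeze_zero (fun m => Metric.infDist_nonneg) hstep ha
  have hNmulL : ∀ x a : A, a ∈ NS → x * a ∈ NS := by
    intro x a ha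
    have hb := hprod x a
    have hstep : ∀ m, Metric.infDist (ι (E.toFun ((x * a) * (ee : ℕ → A) m))) T
        ≤ ‖ι (E.toFun ((x * a) * (ee : ℕ → A) m))
            - μ • (ι (E.toFun (x * (ee : ℕ → A) m)) * ι (E.toFun (a * (ee : ℕ → A) m)))‖
          + (‖μ‖ * (‖x‖ * C + 1)) * Metric.infDist (ι (E.toFun (a * (ee : ℕ → A) m))) T := by
      intro m
      have h1 := hpert (ι (E.toFun ((x * a) * (ee : ℕ → A) m)))
        (μ • (ι (E.toFun (x * (ee : ℕ → A) m)) * ι (E.toFun (a * (ee : ℕ → A) m))))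
      have h2 : Metric.infDist
            (μ • (ι (E.toFun (x * (ee : ℕ → A) m)) * ι (E.toFun (a * (ee : ℕ → A) m)))) T
          ≤ (‖μ‖ * (‖x‖ * C + 1))
            * Metric.infDist (ι (E.toFun (a * (ee : ℕ → A) m))) T := by
        refine hmulL (E.toFun (x * (ee : ℕ → A) m)) _ (‖x‖ * C + 1) (by positivity) ?_
        have hq1 : ‖E.toFun (x * (ee : ℕ → A) m)‖ ≤ ‖x‖ * C := by
          calc ‖E.toFun (x * (ee : ℕ → A) m)‖ ≤ ‖x * (ee : ℕ → A) m‖ := E.contractive _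
            _ ≤ ‖x‖ * ‖(ee : ℕ → A) m‖ := norm_mul_le _ _
            _ ≤ ‖x‖ * C := mul_le_mul_of_nonneg_left (hC m) (norm_nonneg x)
        linarith
      linarith
    refine squeeze_zero (fun m => Metric.infDist_nonneg) hstep ?_
    have := hb.add (ha.const_mul (‖μ‖ * (‖x‖ * C + 1)))
    simpa using this
  have hNmulR : ∀ a x : A, a ∈ NS → a * x ∈ NS := by
    intro a x ha
    have hb := hprod a x
    have hstep : ∀ m, Metric.infDist (ι (E.toFun ((a * x) * (ee : ℕ → A) m))) T
        ≤ ‖ι (E.toFun ((a * x) * (ee : ℕ → A) m))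
            - μ • (ι (E.toFun (a * (ee : ℕ → A) m)) * ι (E.toFun (x * (ee : ℕ → A) m)))‖
          + (‖μ‖ * (‖x‖ * C + 1)) * Metric.infDist (ι (E.toFun (a * (ee : ℕ → A) m))) T := by
      intro m
      have h1 := hpert (ι (E.toFun ((a * x) * (ee : ℕ → A) m)))
        (μ • (ι (E.toFun (a * (ee : ℕ → A) m)) * ι (E.toFun (x * (ee : ℕ → A) m))))
      have h2 : Metric.infDist
            (μ • (ι (E.toFun (a * (ee : ℕ → A) m)) * ι (E.toFun (x * (ee : ℕ → A) m)))) T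
          ≤ (‖μ‖ * (‖x‖ * C + 1))
            * Metric.infDist (ι (E.toFun (a * (ee : ℕ → A) m))) T := by
        refine hmulR (E.toFun (x * (ee : ℕ → A) m)) _ (‖x‖ * C + 1) (by positivity) ?_
        have hq1 : ‖E.toFun (x * (ee : ℕ → A) m)‖ ≤ ‖x‖ * C := by
          calc ‖E.toFun (x * (ee : ℕ → A) m)‖ ≤ ‖x * (ee : ℕ → A) m‖ := E.contractive _
            _ ≤ ‖x‖ * ‖(ee : ℕ → A) m‖ := norm_mul_le _ _
            _ ≤ ‖x‖ * C := mul_le_mul_of_nonneg_left (hC m) (norm_nonneg x)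
        linarith
      linarith
    refine squeeze_zero (fun m => Metric.infDist_nonneg) hstep ?_
    have := hb.add (ha.const_mul (‖μ‖ * (‖x‖ * C + 1)))
    simpa using this
  set NI : TwoSidedIdeal A := TwoSidedIdeal.mk' NS hNzero
    (fun {a b} ha hb => hNadd a b ha hb)
    (fun {a} ha => hNneg a ha)
    (fun {x y} hy => hNmulL x y hy)
    (fun {x y} hx => hNmulR x y hx) with hNI
  have hNIset : (NI : Set A) = NS := by
    ext w
    constructor
    · intro hw
      exact (TwoSidedIdeal.mem_mk' NS _ _ _ _ _ w).mp hw
    · intro hw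
      exact (TwoSidedIdeal.mem_mk' NS _ _ _ _ _ w).mpr hw
  have hNIclosed : IsClosed (NI : Set A) := by
    rw [hNIset]
    rw [← isSeqClosed_iff_isClosed]
    intro f a hf hfa
    show Tendsto (fun m => Metric.infDist (ι (E.toFun (a * (ee : ℕ → A) m))) T) atTop (𝓝 0)
    rw [Metric.tendsto_atTop]
    intro ε hε
    set δ := ε / (2 * (C + 1)) with hδdef
    have hδ0 : 0 < δ := by positivity
    obtain ⟨K₁, hK₁⟩ := Metric.tendsto_atTop.mp hfa δ hδ0
    have hdist : ‖a - f K₁‖ < δ := by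
      have := hK₁ K₁ le_rfl
      rw [dist_comm, dist_eq_norm] at this
      exact this
    have hfk := hf K₁
    obtain ⟨N, hN⟩ := Metric.tendsto_atTop.mp hfk (ε / 2) (by positivity)
    refine ⟨N, fun m hm => ?_⟩
    have h1 := hN m hm
    rw [Real.dist_eq, sub_zero, abs_of_nonneg Metric.infDist_nonneg] at h1
    rw [Real.dist_eq, sub_zero, abs_of_nonneg Metric.infDist_nonneg]
    have h2 : Metric.infDist (ι (E.toFun (a * (ee : ℕ → A) m))) T
        ≤ Metric.infDist (ι (E.toFun (f K₁ * (ee : ℕ → A) m))) T + ‖a - f K₁‖ * C := by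
      refine (hpert (ι (E.toFun (a * (ee : ℕ → A) m)))
        (ι (E.toFun (f K₁ * (ee : ℕ → A) m)))).trans ?_
      refine add_le_add_right ?_ _
      have hddd : ι (E.toFun (a * (ee : ℕ → A) m)) - ι (E.toFun (f K₁ * (ee : ℕ → A) m))
          = ι (E.toFun ((a - f K₁) * (ee : ℕ → A) m)) := by
        rw [sub_mul, map_sub, map_sub]
      rw [hddd]
      exact hbound _ m
    have h3 : ‖a - f K₁‖ * C ≤ δ * C := mul_le_mul_of_nonneg_right hdist.le hC0
    have h4 : δ * C ≤ ε / 2 := by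
      rw [hδdef]
      rw [div_mul_eq_mul_div]
      rw [div_le_div_iff₀ (by positivity) (by norm_num : (0:ℝ) < 2)]
      nlinarith [hε.le, hC0]
    calc Metric.infDist (ι (E.toFun (a * (ee : ℕ → A) m))) T
        ≤ Metric.infDist (ι (E.toFun (f K₁ * (ee : ℕ → A) m))) T + ‖a - f K₁‖ * C := h2
      _ < ε / 2 + ε / 2 := add_lt_add_of_lt_of_le h1 (le_trans h3 h4)
      _ = ε := by ring
  rcases hAsimple.2 NI hNIclosed with h0 | huniv
  · -- I = {0}
    left
    ext p
    simp only [Set.mem_singleton_iff]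
    constructor
    · intro hp
      have hmem : ι p ∈ NS := by
        show Tendsto (fun m => Metric.infDist (ι (E.toFun (ι p * (ee : ℕ → A) m))) T)
          atTop (𝓝 0)
        have hz : (fun m => Metric.infDist (ι (E.toFun (ι p * (ee : ℕ → A) m))) T)
            = fun _ => (0:ℝ) := by
          funext m
          rw [s6_Eleft ι E]
          refine Metric.infDist_zero_of_mem ?_
          exact ⟨p * E.toFun ((ee : ℕ → A) m), I.mul_mem_right _ _ hp, rfl⟩
        rw [hz]
        exact tendsto_const_nhds
      have hmem2 : ι p ∈ (NI : Set A) := by rw [hNIset]; exact hmem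
      rw [h0] at hmem2
      have hz2 : ι p = 0 := hmem2
      exact hι (by rw [hz2, map_zero] : ι p = ι 0)
    · rintro rfl
      exact I.zero_mem
  · -- I = univ
    right
    have h1NS : (1 : A) ∈ NS := by
      have hm1 : (1 : A) ∈ (NI : Set A) := by rw [huniv]; trivial
      rwa [hNIset] at hm1
    have h1T : Tendsto (fun m => Metric.infDist (ι (E.toFun ((ee : ℕ → A) m))) T)
        atTop (𝓝 0) := by
      have := h1NS
      simp only [hNS, Set.mem_setOf_eq, one_mul] at this
      exact this
    have hLc : Tendsto (fun m => ‖μ • ι (E.toFun ((ee : ℕ → A) m)) - 1‖) atTop (𝓝 0) := by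
      have h := hL
      have he' : s6F ι E e = s6mk (mapBdd E.selfMap E.selfMap_contractive ee) := by
        rw [← hee, s6F_mk]
      rw [he', ← s6mk_smul, ← s6mk_one] at h
      have h2 := s6mk_eq_iff.mp h
      exact h2
    have hch : ∀ m : ℕ, ∃ p : P, p ∈ I ∧
        dist (ι (E.toFun ((ee : ℕ → A) m))) (ι p)
          < Metric.infDist (ι (E.toFun ((ee : ℕ → A) m))) T + 1 / ((m:ℝ) + 1) := by
      intro m
      have hlt := lt_add_of_pos_right (Metric.infDist (ι (E.toFun ((ee : ℕ → A) m))) T)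
        (by positivity : (0:ℝ) < 1 / ((m:ℝ) + 1))
      obtain ⟨t, htT, hd⟩ := (Metric.infDist_lt_iff hTne).mp hlt
      obtain ⟨p, hp, rfl⟩ := htT
      exact ⟨p, hp, hd⟩
    choose j hjI hjd using hch
    have hjconv : Tendsto (fun m => ‖(μ • j m : P) - 1‖) atTop (𝓝 0) := by
      have hb : ∀ m, ‖(μ • j m : P) - 1‖
          ≤ ‖μ‖ * (Metric.infDist (ι (E.toFun ((ee : ℕ → A) m))) T + 1 / ((m:ℝ) + 1))
            + ‖μ • ι (E.toFun ((ee : ℕ → A) m)) - 1‖ := by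
        intro m
        have hE : (μ • j m : P) - 1 = E.toFun (μ • ι (j m) - 1) := by
          rw [map_sub, map_smul, E.fixes, s6_Eone ι E]
        have htri : ‖μ • ι (j m) - 1‖
            ≤ ‖μ • ι (j m) - μ • ι (E.toFun ((ee : ℕ → A) m))‖
              + ‖μ • ι (E.toFun ((ee : ℕ → A) m)) - 1‖ := by
          have hsplit : μ • ι (j m) - 1
              = (μ • ι (j m) - μ • ι (E.toFun ((ee : ℕ → A) m)))
                + (μ • ι (E.toFun ((ee : ℕ → A) m)) - 1) := by abel
          rw [hsplit]
          exact norm_add_le _ _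
        have hterm1 : ‖μ • ι (j m) - μ • ι (E.toFun ((ee : ℕ → A) m))‖
            ≤ ‖μ‖ * (Metric.infDist (ι (E.toFun ((ee : ℕ → A) m))) T + 1 / ((m:ℝ) + 1)) := by
          rw [← smul_sub, norm_smul]
          refine mul_le_mul_of_nonneg_left ?_ (norm_nonneg μ)
          have := (hjd m).le
          rw [dist_eq_norm] at this
          calc ‖ι (j m) - ι (E.toFun ((ee : ℕ → A) m))‖
              = ‖ι (E.toFun ((ee : ℕ → A) m)) - ι (j m)‖ := norm_sub_rev _ _
            _ ≤ Metric.infDist (ι (E.toFun ((ee : ℕ → A) m))) T + 1 / ((m:ℝ) + 1) := this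
        calc ‖(μ • j m : P) - 1‖ = ‖E.toFun (μ • ι (j m) - 1)‖ := by rw [hE]
          _ ≤ ‖μ • ι (j m) - 1‖ := E.contractive _
          _ ≤ ‖μ • ι (j m) - μ • ι (E.toFun ((ee : ℕ → A) m))‖
              + ‖μ • ι (E.toFun ((ee : ℕ → A) m)) - 1‖ := htri
          _ ≤ ‖μ‖ * (Metric.infDist (ι (E.toFun ((ee : ℕ → A) m))) T + 1 / ((m:ℝ) + 1))
              + ‖μ • ι (E.toFun ((ee : ℕ → A) m)) - 1‖ := add_le_add_left hterm1 _
      refine squeeze_zero (fun m => norm_nonneg _) hb ?_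
      have l1 : Tendsto (fun m : ℕ =>
          Metric.infDist (ι (E.toFun ((ee : ℕ → A) m))) T + 1 / ((m:ℝ) + 1)) atTop (𝓝 0) := by
        have h00 := h1T.add tendsto_one_div_add_atTop_nhds_zero_nat
        rw [add_zero] at h00
        exact h00
      have l2 := (l1.const_mul ‖μ‖).add hLc
      rw [mul_zero, add_zero] at l2
      exact l2
    have h1I : (1 : P) ∈ I := by
      have hconv : Tendsto (fun m => (μ • j m : P)) atTop (𝓝 (1 : P)) := by
        rw [tendsto_iff_norm_sub_tendsto_zero]
        exact hjconv
      have hmemI : ∀ m, (μ • j m : P) ∈ (I : Set P) := by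
        intro m
        rw [Algebra.smul_def]
        exact I.mul_mem_left _ _ (hjI m)
      exact hIclosed.mem_of_tendsto hconv (Filter.Eventually.of_forall hmemI)
    ext p
    simp only [Set.mem_univ, iff_true]
    have := I.mul_mem_left p 1 h1I
    simpa using this
end
end

section
/- Let α be an action of a finite group G on a unital C*-algebra A with the Rokhlin property, let E: A → A^G, E(a) = |G|^{-1} Σ_{g∈G} α_g(a), be the canonical conditional expectation, and suppose {(u_i, u_i*)}_{i=1}^n is a quasi-basis for E satisfying Σ_i u_i u_i* = |G|·1 and Σ_i u_i α_g(u_i*) = 0 for all g ≠ 1. Let H be a subgroup of G and E_H: A → A^H, E_H(x) = |H|^{-1} Σ_{h∈H} α_h(x). Then {(E_H(u_i), E_H(u_i*))}_{i=1}^n is a quasi-basis for the restricted conditional expectation F = E|_{A^H}: A^H → A^G, and Index F = (|G|/|H|)·1. -/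
open Filter Topology

noncomputable section

universe u v w

section Aux16

variable {G : Type u} [Group G] [Fintype G] {A : Type u} [CStarAlgebra A]
  (α : G →* (A ≃⋆ₐ[ℂ] A))

lemma groupAvg_apply (x : A) :
    groupAvg α x = (Fintype.card G : ℂ)⁻¹ • ∑ g, α g x := rfl

lemma subgroupAvg_apply (H : Subgroup G) [Fintype H] (x : A) :
    subgroupAvg α H x = (Fintype.card H : ℂ)⁻¹ • ∑ h : H, α (h : G) x := rfl

lemma alpha_mul (g h : G) (x : A) : α (g * h) x = α g (α h x) := by
  rw [map_mul]; exact StarAlgEquiv.mul_apply _ _ _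

lemma alpha_groupAvg (g : G) (x : A) : α g (groupAvg α x) = groupAvg α x := by
  simp only [groupAvg_apply, map_smul, map_sum]
  congr 1
  calc ∑ h : G, α g (α h x) = ∑ h : G, α (g * h) x :=
        Finset.sum_congr rfl fun h _ => (alpha_mul α g h x).symm
    _ = ∑ h : G, α h x := Equiv.sum_comp (Equiv.mulLeft g) (fun h => α h x)

lemma groupAvg_alpha (g : G) (x : A) : groupAvg α (α g x) = groupAvg α x := by
  simp only [groupAvg_apply]
  congr 1
  calc ∑ h : G, α h (α g x) = ∑ h : G, α (h * g) x :=
        Finset.sum_congr rfl fun h _ => (alpha_mul α h g x).symm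
    _ = ∑ h : G, α h x := Equiv.sum_comp (Equiv.mulRight g) (fun h => α h x)

lemma qb_conj {n : ℕ} (u : Fin n → A)
    (hqb : ∀ x : A, ∑ i, groupAvg α (x * u i) * star (u i) = x)
    (x : A) (k : G) :
    ∑ i, groupAvg α (x * u i) * α k (star (u i)) = α k x := by
  have h := congrArg (α k) (hqb x)
  rw [map_sum] at h
  calc ∑ i, groupAvg α (x * u i) * α k (star (u i))
      = ∑ i, α k (groupAvg α (x * u i) * star (u i)) := by
        refine Finset.sum_congr rfl fun i _ => ?_
        rw [map_mul (α k), alpha_groupAvg]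
    _ = α k x := h

end Aux16

/-- Let `α` be an action of a finite group `G` on a unital C*-algebra `A`
with the Rokhlin property, and let `E : A → A^G` be the canonical conditional expectation with
a quasi-basis `{(uᵢ, uᵢ*)}` satisfying `∑ᵢ uᵢuᵢ* = |G|·1` and `∑ᵢ uᵢ α_g(uᵢ*) = 0` for
`g ≠ 1`.  Then, for a subgroup `H ≤ G`, `{(E_H(uᵢ), E_H(uᵢ)*)}` is a quasi-basis for the
restricted conditional expectation `F = E|_{A^H} : A^H → A^G` and `Index F = (|G|/|H|)·1`. -/
theorem statement16 {G A : Type u} [Group G] [Fintype G] [CStarAlgebra A]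
    (α : G →* (A ≃⋆ₐ[ℂ] A)) (hα : ActionRokhlin α)
    {n : ℕ} (u : Fin n → A)
    (hqb : ∀ x : A, ∑ i, groupAvg α (x * u i) * star (u i) = x)
    (hidx : ∑ i, u i * star (u i) = (Fintype.card G : ℂ) • 1)
    (horth : ∀ g : G, g ≠ 1 → ∑ i, u i * α g (star (u i)) = 0)
    (H : Subgroup G) [Fintype H] :
    (∀ x : A, (∀ h : H, α (h : G) x = x) →
      ∑ i, groupAvg α (x * subgroupAvg α H (u i)) * star (subgroupAvg α H (u i)) = x) ∧
    ∑ i, subgroupAvg α H (u i) * star (subgroupAvg α H (u i))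
      = ((Fintype.card G : ℂ) / (Fintype.card H : ℂ)) • 1 := by
  classical
  have hcH : (Fintype.card H : ℂ) ≠ 0 := Nat.cast_ne_zero.mpr Fintype.card_ne_zero
  have hstar : ∀ i, star (subgroupAvg α H (u i))
      = (Fintype.card H : ℂ)⁻¹ • ∑ h : H, α (h : G) (star (u i)) := by
    intro i
    rw [subgroupAvg_apply, star_smul, star_sum]
    congr 1
    · simp
    · exact Finset.sum_congr rfl fun h _ => (map_star (α (h : G)) (u i)).symm
  constructor
  · intro x hx
    have key1 : ∀ i, groupAvg α (x * subgroupAvg α H (u i)) = groupAvg α (x * u i) := by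
      intro i
      rw [subgroupAvg_apply, mul_smul_comm, Finset.mul_sum, map_smul, map_sum]
      have hterm : ∀ h : H, groupAvg α (x * α (h : G) (u i)) = groupAvg α (x * u i) := by
        intro h
        have hxh : x * α (h : G) (u i) = α (h : G) (x * u i) := by
          rw [map_mul (α (h : G)), hx h]
        rw [hxh, groupAvg_alpha]
      rw [Finset.sum_congr rfl (fun h _ => hterm h), Finset.sum_const, Finset.card_univ,
        ← Nat.cast_smul_eq_nsmul ℂ, smul_smul, inv_mul_cancel₀ hcH, one_smul]
    calc ∑ i, groupAvg α (x * subgroupAvg α H (u i)) * star (subgroupAvg α H (u i))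
        = ∑ i, groupAvg α (x * u i)
            * ((Fintype.card H : ℂ)⁻¹ • ∑ h : H, α (h : G) (star (u i))) := by
          exact Finset.sum_congr rfl fun i _ => by rw [key1 i, hstar i]
      _ = (Fintype.card H : ℂ)⁻¹
            • ∑ i, ∑ h : H, groupAvg α (x * u i) * α (h : G) (star (u i)) := by
          rw [Finset.smul_sum]
          exact Finset.sum_congr rfl fun i _ => by rw [mul_smul_comm, Finset.mul_sum]
      _ = (Fintype.card H : ℂ)⁻¹
            • ∑ h : H, ∑ i, groupAvg α (x * u i) * α (h : G) (star (u i)) := by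
          rw [Finset.sum_comm]
      _ = (Fintype.card H : ℂ)⁻¹ • ∑ h : H, α (h : G) x := by
          congr 1
          exact Finset.sum_congr rfl fun h _ => qb_conj α u hqb x (h : G)
      _ = (Fintype.card H : ℂ)⁻¹ • ∑ _h : H, x := by
          congr 1
          exact Finset.sum_congr rfl fun h _ => hx h
      _ = x := by
          rw [Finset.sum_const, Finset.card_univ, ← Nat.cast_smul_eq_nsmul ℂ, smul_smul,
            inv_mul_cancel₀ hcH, one_smul]
  · have key2 : ∀ h k : H, ∑ i, α (h : G) (u i) * α (k : G) (star (u i))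
        = if h = k then (Fintype.card G : ℂ) • (1 : A) else 0 := by
      intro h k
      have step : ∀ i, α (h : G) (u i) * α (k : G) (star (u i))
          = α (h : G) (u i * α ((h : G)⁻¹ * (k : G)) (star (u i))) := by
        intro i
        rw [map_mul (α (h : G)), ← alpha_mul, mul_inv_cancel_left]
      rw [Finset.sum_congr rfl (fun i _ => step i), ← map_sum]
      by_cases hk : h = k
      · subst hk
        simp only [inv_mul_cancel]
        have h1 : ∀ i, u i * α (1 : G) (star (u i)) = u i * star (u i) := by
          intro i
          rw [map_one]
          exact congrArg _ (StarAlgEquiv.one_apply _)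
        rw [Finset.sum_congr rfl (fun i _ => h1 i), hidx, map_smul, map_one]
        simp
      · have hne : (h : G)⁻¹ * (k : G) ≠ 1 := by
          intro hcon
          exact hk (Subtype.ext (inv_mul_eq_one.mp hcon))
        rw [horth _ hne, map_zero, if_neg hk]
    calc ∑ i, subgroupAvg α H (u i) * star (subgroupAvg α H (u i))
        = ∑ i, ((Fintype.card H : ℂ)⁻¹ • ∑ h : H, α (h : G) (u i))
            * ((Fintype.card H : ℂ)⁻¹ • ∑ k : H, α (k : G) (star (u i))) := by
          exact Finset.sum_congr rfl fun i _ => by rw [hstar i, subgroupAvg_apply]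
      _ = ((Fintype.card H : ℂ)⁻¹ * (Fintype.card H : ℂ)⁻¹)
            • ∑ i, ∑ h : H, ∑ k : H, α (h : G) (u i) * α (k : G) (star (u i)) := by
          rw [Finset.smul_sum]
          refine Finset.sum_congr rfl fun i _ => ?_
          rw [smul_mul_smul_comm, Finset.sum_mul_sum]
      _ = ((Fintype.card H : ℂ)⁻¹ * (Fintype.card H : ℂ)⁻¹)
            • ∑ h : H, ∑ k : H, ∑ i, α (h : G) (u i) * α (k : G) (star (u i)) := by
          rw [Finset.sum_comm]
          congr 1
          exact Finset.sum_congr rfl fun h _ => Finset.sum_comm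
      _ = ((Fintype.card H : ℂ)⁻¹ * (Fintype.card H : ℂ)⁻¹)
            • ∑ h : H, ∑ k : H, (if h = k then (Fintype.card G : ℂ) • (1 : A) else 0) := by
          congr 1
          exact Finset.sum_congr rfl fun h _ =>
            Finset.sum_congr rfl fun k _ => key2 h k
      _ = ((Fintype.card H : ℂ)⁻¹ * (Fintype.card H : ℂ)⁻¹)
            • ∑ _h : H, (Fintype.card G : ℂ) • (1 : A) := by
          congr 1
          exact Finset.sum_congr rfl fun h _ => by simp
      _ = ((Fintype.card G : ℂ) / (Fintype.card H : ℂ)) • 1 := by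
          rw [Finset.sum_const, Finset.card_univ, ← Nat.cast_smul_eq_nsmul ℂ, smul_smul,
            smul_smul]
          congr 1
          field_simp
end
end
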